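/- arXiv:1204.4839 — 8 statements merged into one kernel-verified Lean document; each statement's English description precedes it below -/
import Mathlib

section
/- Let X ⊆ ℕ be infinite and α : ℕ → 𝕋. Then α ∈ F_X if and only if both lim_{j→∞} Δ_{I(X,j)}(α, 1) = 0 and lim_{j→∞} Δ_{{n(X,j), n(X,j+1)}}(α, 1) = 0. -/
open Filter Topology MultiplierAlgebra

noncomputable section

/-- `Δ_I(α,β) = max_{i,j ∈ I} |α(i)·conj(α(j)) − β(i)·conj(β(j))|`
(the maximum over the empty set being `0`). -/
def Delta (I : Finset ℕ) (α β : ℕ → Circle) : ℝ :=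
  ((I ×ˢ I).sup fun p : ℕ × ℕ =>
    ‖(α p.1 : ℂ) * (starRingEnd ℂ) (α p.2 : ℂ) -
      (β p.1 : ℂ) * (starRingEnd ℂ) (β p.2 : ℂ)‖₊ : NNReal)

/-- `n(X,j)`: the `j`-th element of `{0} ∪ X` in increasing order. -/
def nEnum (X : Set ℕ) (j : ℕ) : ℕ := Nat.nth (· ∈ insert 0 X) j

/-- `I(X,j) = [n(X,j), n(X,j+1))`, as a finite set of naturals. -/
def intvl (X : Set ℕ) (j : ℕ) : Finset ℕ := Finset.Ico (nEnum X j) (nEnum X (j + 1))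

/-- Membership in `F_X`: `lim_j Δ_{I(X,j) ∪ I(X,j+1)}(α, 1) = 0`. -/
def memF (X : Set ℕ) (α : ℕ → Circle) : Prop :=
  Tendsto (fun j => Delta (intvl X j ∪ intvl X (j + 1)) α 1) atTop (𝓝 0)

/-- `Y ⊆* X`: almost inclusion, i.e. `Y \ X` is finite. -/
def AlmostSubset (Y X : Set ℕ) : Prop := (Y \ X).Finite

/-- The NNReal version of `Delta _ α 1`, expressed with `nndist`. -/
def DeltaNN (I : Finset ℕ) (α : ℕ → Circle) : NNReal :=
  (I ×ˢ I).sup fun p : ℕ × ℕ => nndist (α p.1 : ℂ) (α p.2 : ℂ)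

lemma Delta_one_eq (I : Finset ℕ) (α : ℕ → Circle) : Delta I α 1 = DeltaNN I α := by
  unfold Delta DeltaNN
  norm_cast
  apply Finset.sup_congr rfl
  intro p _
  have h1 : ((1 : ℕ → Circle) p.1 : ℂ) = 1 := by simp
  have h2 : ((1 : ℕ → Circle) p.2 : ℂ) = 1 := by simp
  rw [h1, h2, map_one, mul_one]
  have key : (α p.1 : ℂ) * (starRingEnd ℂ) (α p.2 : ℂ) - 1
      = ((α p.1 : ℂ) - (α p.2 : ℂ)) * (starRingEnd ℂ) (α p.2 : ℂ) := by
    have : (starRingEnd ℂ) (α p.2 : ℂ) * (α p.2 : ℂ) = 1 := by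
      rw [mul_comm, Complex.mul_conj, Circle.normSq_coe]; norm_num
    linear_combination this
  rw [key, nnnorm_mul, nndist_eq_nnnorm]
  have : ‖(starRingEnd ℂ) (α p.2 : ℂ)‖₊ = 1 := by
    simp [nnnorm, Circle.norm_coe]
  rw [this, mul_one]

lemma le_DeltaNN {I : Finset ℕ} (α : ℕ → Circle) {x y : ℕ} (hx : x ∈ I) (hy : y ∈ I) :
    nndist (α x : ℂ) (α y : ℂ) ≤ DeltaNN I α := by
  unfold DeltaNN
  have := Finset.le_sup (f := fun p : ℕ × ℕ => nndist (α p.1 : ℂ) (α p.2 : ℂ))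
    (b := (x, y)) (Finset.mem_product.2 ⟨hx, hy⟩)
  simpa using this

lemma DeltaNN_mono {I I' : Finset ℕ} (h : I ⊆ I') (α : ℕ → Circle) :
    DeltaNN I α ≤ DeltaNN I' α :=
  Finset.sup_mono (Finset.product_subset_product h h)

lemma nEnum_lt (X : Set ℕ) (hX : X.Infinite) (j k : ℕ) (h : j < k) :
    nEnum X j < nEnum X k := by
  have : (insert 0 X).Infinite := hX.mono (Set.subset_insert _ _)
  exact (Nat.nth_lt_nth (p := (· ∈ insert 0 X)) this).2 h

/-- `α ∈ F_X` iff `Δ_{I(X,j)}(α,1) → 0` and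
`Δ_{{n(X,j),n(X,j+1)}}(α,1) → 0`. -/
theorem memF_iff (X : Set ℕ) (hX : X.Infinite) (α : ℕ → Circle) :
    memF X α ↔
      (Tendsto (fun j => Delta (intvl X j) α 1) atTop (𝓝 0) ∧
        Tendsto (fun j => Delta {nEnum X j, nEnum X (j + 1)} α 1) atTop (𝓝 0)) := by
  have hmemj : ∀ j, nEnum X j ∈ intvl X j := fun j =>
    Finset.mem_Ico.2 ⟨le_refl _, nEnum_lt X hX j (j+1) (by omega)⟩
  have hDnonneg : ∀ (I : Finset ℕ), 0 ≤ Delta I α 1 := fun I => by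
    rw [Delta_one_eq]; exact (DeltaNN I α).coe_nonneg
  constructor
  · intro h
    constructor
    · apply squeeze_zero (fun j => hDnonneg _) _ h
      intro j
      rw [Delta_one_eq, Delta_one_eq]
      exact_mod_cast DeltaNN_mono Finset.subset_union_left α
    · apply squeeze_zero (fun j => hDnonneg _) _ h
      intro j
      rw [Delta_one_eq, Delta_one_eq]
      refine NNReal.coe_le_coe.2 (DeltaNN_mono ?_ α)
      intro x hx
      simp only [Finset.mem_insert, Finset.mem_singleton] at hx
      rcases hx with rfl | rfl
      · exact Finset.mem_union_left _ (hmemj j)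
      · exact Finset.mem_union_right _ (hmemj (j+1))
  · rintro ⟨h1, h2⟩
    have h1' : Tendsto (fun j => Delta (intvl X (j+1)) α 1) atTop (𝓝 0) :=
      h1.comp (tendsto_add_atTop_nat 1)
    have hbound : ∀ j, Delta (intvl X j ∪ intvl X (j+1)) α 1 ≤
        Delta (intvl X j) α 1 + Delta {nEnum X j, nEnum X (j+1)} α 1
          + Delta (intvl X (j+1)) α 1 := by
      intro j
      simp only [Delta_one_eq]
      have key : DeltaNN (intvl X j ∪ intvl X (j+1)) α ≤
          DeltaNN (intvl X j) α + DeltaNN {nEnum X j, nEnum X (j+1)} α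
            + DeltaNN (intvl X (j+1)) α := by
        apply Finset.sup_le
        rintro ⟨a, b⟩ hab
        rw [Finset.mem_product] at hab
        obtain ⟨ha, hb⟩ := hab
        have pairmem : ∀ x y, x ∈ ({nEnum X j, nEnum X (j+1)} : Finset ℕ) →
            y ∈ ({nEnum X j, nEnum X (j+1)} : Finset ℕ) →
            nndist (α x : ℂ) (α y : ℂ) ≤ DeltaNN {nEnum X j, nEnum X (j+1)} α :=
          fun x y hx hy => le_DeltaNN α hx hy
        have mem1 : ∀ x y, x ∈ intvl X j → y ∈ intvl X j →
            nndist (α x : ℂ) (α y : ℂ) ≤ DeltaNN (intvl X j) α :=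
          fun x y hx hy => le_DeltaNN α hx hy
        have mem2 : ∀ x y, x ∈ intvl X (j+1) → y ∈ intvl X (j+1) →
            nndist (α x : ℂ) (α y : ℂ) ≤ DeltaNN (intvl X (j+1)) α :=
          fun x y hx hy => le_DeltaNN α hx hy
        have hcross : ∀ x y, x ∈ intvl X j → y ∈ intvl X (j+1) →
            nndist (α x : ℂ) (α y : ℂ) ≤ DeltaNN (intvl X j) α
              + DeltaNN {nEnum X j, nEnum X (j+1)} α + DeltaNN (intvl X (j+1)) α := by
          intro x y hx hy
          calc nndist (α x : ℂ) (α y : ℂ)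
              ≤ nndist (α x : ℂ) (α (nEnum X j) : ℂ)
                + nndist (α (nEnum X j) : ℂ) (α (nEnum X (j+1)) : ℂ)
                + nndist (α (nEnum X (j+1)) : ℂ) (α y : ℂ) :=
                by
                  rw [add_assoc]
                  exact (nndist_triangle _ ((α (nEnum X j)) : ℂ) _).trans
                    (add_le_add_right (nndist_triangle _ ((α (nEnum X (j+1))) : ℂ) _) _)
            _ ≤ DeltaNN (intvl X j) α + DeltaNN {nEnum X j, nEnum X (j+1)} α
                + DeltaNN (intvl X (j+1)) α := by
                gcongr
                · exact mem1 _ _ hx (hmemj j)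
                · exact pairmem _ _ (by simp) (by simp)
                · exact mem2 _ _ (hmemj (j+1)) hy
        rcases Finset.mem_union.1 ha with ha | ha <;>
          rcases Finset.mem_union.1 hb with hb | hb
        · calc nndist (α a : ℂ) (α b : ℂ) ≤ DeltaNN (intvl X j) α := mem1 _ _ ha hb
            _ ≤ _ := by
              refine le_trans ?_ (le_add_right (le_refl _))
              exact le_add_right (le_refl _)
        · exact hcross a b ha hb
        · rw [nndist_comm]; exact hcross b a hb ha
        · calc nndist (α a : ℂ) (α b : ℂ) ≤ DeltaNN (intvl X (j+1)) α := mem2 _ _ ha hb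
            _ ≤ _ := le_add_left (le_refl _)
      exact_mod_cast key
    have hsum : Tendsto (fun j => Delta (intvl X j) α 1
        + Delta {nEnum X j, nEnum X (j+1)} α 1 + Delta (intvl X (j+1)) α 1)
        atTop (𝓝 0) := by
      have := (h1.add h2).add h1'
      simpa using this
    exact squeeze_zero (fun j => hDnonneg _) hbound hsum
end
end

section
/- Let X, Y ⊆ ℕ be infinite sets with Y ⊆* X (i.e. Y \ X is finite). Then F_Y ⊆ F_X. -/
open Filter Topology MultiplierAlgebra

noncomputable section

lemma Delta_nonneg (I : Finset ℕ) (α β : ℕ → Circle) : 0 ≤ Delta I α β :=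
  NNReal.coe_nonneg _

lemma Delta_mono {I J : Finset ℕ} (h : I ⊆ J) (α β : ℕ → Circle) :
    Delta I α β ≤ Delta J α β := by
  unfold Delta
  exact_mod_cast Finset.sup_mono (Finset.product_subset_product h h)

lemma setOf_insert_infinite (X : Set ℕ) (hX : X.Infinite) :
    {n | n ∈ insert 0 X}.Infinite := by
  exact hX.mono (Set.subset_insert 0 X)

lemma intvl_union (X : Set ℕ) (hX : X.Infinite) (j : ℕ) :
    intvl X j ∪ intvl X (j + 1) = Finset.Ico (nEnum X j) (nEnum X (j + 2)) := by
  have h := (Nat.nth_monotone (setOf_insert_infinite X hX) : Monotone (nEnum X))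
  exact Finset.Ico_union_Ico_eq_Ico (h (by omega)) (h (by omega))

lemma key (X Y : Set ℕ) (hX : X.Infinite) (hY : Y.Infinite) (N : ℕ)
    (hN : ∀ y ∈ Y, N ≤ y → y ∈ X) (j : ℕ) :
    ∃ k, N ≤ nEnum X j →
      (nEnum X j < nEnum Y (k + 1) ∧
      Finset.Ico (nEnum X j) (nEnum X (j + 2)) ⊆ Finset.Ico (nEnum Y k) (nEnum Y (k + 2))) := by
  classical
  have hpX := setOf_insert_infinite X hX
  have hpY := setOf_insert_infinite Y hY
  set p : ℕ → Prop := (· ∈ insert 0 Y) with hp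
  set q : ℕ → Prop := (· ∈ insert 0 X) with hq
  have hc1 : 1 ≤ Nat.count p (nEnum X j + 1) := by
    have h0 : Nat.nth p 0 = 0 := Nat.nth_zero_of_zero (Set.mem_insert 0 Y)
    have := (Nat.lt_nth_iff_count_lt hpY (a := 0) (b := nEnum X j + 1)).2 (by omega)
    omega
  refine ⟨Nat.count p (nEnum X j + 1) - 1, fun hj => ?_⟩
  set k := Nat.count p (nEnum X j + 1) - 1 with hkd
  have hk : k + 1 = Nat.count p (nEnum X j + 1) := by omega
  have ha : nEnum Y k ≤ nEnum X j := by
    have := Nat.nth_lt_of_lt_count (p := p) (n := nEnum X j + 1) (k := k) (by omega)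
    exact Nat.lt_succ_iff.1 this
  have hb : nEnum X j < nEnum Y (k + 1) := by
    have h := (Nat.count_le_iff_le_nth hpY (a := nEnum X j + 1) (b := k + 1)).1 (le_of_eq hk.symm)
    have e : nEnum Y (k + 1) = Nat.nth p (k + 1) := rfl
    omega
  have huniq : ∀ m, p m → nEnum X j < m → m < nEnum X (j + 2) → m = nEnum X (j + 1) := by
    intro m hm h1 h2
    have hm0 : m ≠ 0 := by omega
    have hmY : m ∈ Y := by
      rcases (Set.mem_insert_iff.1 hm) with h | h
      · exact absurd h hm0
      · exact h
    have hmX : q m := Set.mem_insert_of_mem _ (hN m hmY (by omega))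
    have hlt : j < Nat.count q m := (Nat.lt_nth_iff_count_lt hpX).2 h1
    have hlt2 : Nat.count q m < j + 2 := by
      refine (Nat.nth_lt_nth hpX).1 ?_
      rw [Nat.nth_count hmX]
      exact h2
    have : Nat.count q m = j + 1 := by omega
    rw [← this]
    exact (Nat.nth_count hmX).symm
  have hc' : nEnum X (j + 2) ≤ nEnum Y (k + 2) := by
    by_contra h
    push_neg at h
    have hm1 : p (nEnum Y (k + 1)) := Nat.nth_mem_of_infinite hpY _
    have hm2 : p (nEnum Y (k + 2)) := Nat.nth_mem_of_infinite hpY _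
    have h12 : nEnum Y (k + 1) < nEnum Y (k + 2) := (Nat.nth_lt_nth hpY).2 (by omega)
    have e1 := huniq _ hm1 hb (lt_trans h12 h)
    have e2 := huniq _ hm2 (lt_trans hb h12) h
    omega
  exact ⟨hb, Finset.Ico_subset_Ico ha hc'⟩

/-- if `Y ⊆* X` then `F_Y ⊆ F_X`. -/
theorem F_mono (X Y : Set ℕ) (hX : X.Infinite) (hY : Y.Infinite)
    (hYX : AlmostSubset Y X) :
    ∀ α : ℕ → Circle, memF Y α → memF X α := by
  intro α hα
  have hpX := setOf_insert_infinite X hX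
  have hpY := setOf_insert_infinite Y hY
  obtain ⟨N, hN⟩ : ∃ N, ∀ y ∈ Y, N ≤ y → y ∈ X := by
    obtain ⟨M, hM⟩ := hYX.bddAbove
    refine ⟨M + 1, fun y hy hNy => by_contra fun hx => ?_⟩
    have := hM (⟨hy, hx⟩ : y ∈ Y \ X)
    omega
  choose k hk using key X Y hX hY N hN
  have hnX : Tendsto (nEnum X) atTop atTop := (Nat.nth_strictMono hpX).tendsto_atTop
  have hjN : ∀ᶠ j in atTop, N ≤ nEnum X j := hnX.eventually_ge_atTop N
  have hktop : Tendsto k atTop atTop := by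
    rw [tendsto_atTop]
    intro K
    filter_upwards [hnX.eventually_ge_atTop (nEnum Y K), hjN] with j h1 h2
    obtain ⟨hb, -⟩ := hk j h2
    have := (Nat.nth_lt_nth hpY).1 (lt_of_le_of_lt h1 hb)
    omega
  refine squeeze_zero'
    (g := fun j => Delta (intvl Y (k j) ∪ intvl Y (k j + 1)) α 1)
    (Eventually.of_forall fun j => Delta_nonneg _ _ _) ?_ (hα.comp hktop)
  filter_upwards [hjN] with j hj
  obtain ⟨-, hsub⟩ := hk j hj
  refine Delta_mono ?_ α 1
  rw [intvl_union X hX, intvl_union Y hY]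
  exact hsub
end
end

section
/- Let X and X' be infinite subsets of ℕ with X' ⊆ X, and suppose that for every m ∈ ℕ there exists k ∈ ℕ such that the interval I(X', k) contains at least m of the intervals I(X, j). Then F_{X'} is a proper subset of F_X; that is, there exists α ∈ F_X with α ∉ F_{X'}. -/
open Filter Topology MultiplierAlgebra

noncomputable section

namespace FPaux

open Real Complex

lemma norm_exp_mul_I_sub_one (x : ℝ) : ‖Complex.exp (x * Complex.I) - 1‖ ≤ |x| := by
  have h : Complex.exp (x * Complex.I) - 1
      = ((Real.cos x - 1 : ℝ) : ℂ) + (Real.sin x : ℝ) * Complex.I := by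
    rw [Complex.exp_mul_I]; push_cast; ring
  rw [h, Complex.norm_def, Complex.normSq_add_mul_I]
  have h2 : (Real.cos x - 1) ^ 2 + Real.sin x ^ 2 = 2 - 2 * Real.cos x := by
    have := Real.sin_sq_add_cos_sq x; nlinarith
  have h3 : 2 - 2 * Real.cos x ≤ x ^ 2 := by
    have := Real.one_sub_sq_div_two_le_cos (x := x); linarith
  rw [h2]
  calc Real.sqrt (2 - 2 * Real.cos x) ≤ Real.sqrt (x ^ 2) := Real.sqrt_le_sqrt h3
    _ = |x| := Real.sqrt_sq_eq_abs x

lemma norm_circle_exp (x y : ℝ) :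
    ‖(Circle.exp x : ℂ) * (starRingEnd ℂ) (Circle.exp y : ℂ) - 1‖ ≤ |x - y| := by
  have h1 : (starRingEnd ℂ) (Complex.exp ((y : ℂ) * Complex.I))
      = Complex.exp (-((y : ℂ) * Complex.I)) := by
    rw [← Complex.exp_conj, map_mul, Complex.conj_I, Complex.conj_ofReal]; ring_nf
  rw [Circle.coe_exp, Circle.coe_exp, h1, ← Complex.exp_add]
  have h2 : (x : ℂ) * Complex.I + -((y : ℂ) * Complex.I) = ((x - y : ℝ) : ℂ) * Complex.I := by
    push_cast; ring
  rw [h2]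
  exact norm_exp_mul_I_sub_one _

lemma delta_nonneg (I : Finset ℕ) (α β : ℕ → Circle) : 0 ≤ Delta I α β :=
  NNReal.coe_nonneg _

lemma delta_mono {I J : Finset ℕ} (h : I ⊆ J) (α β : ℕ → Circle) :
    Delta I α β ≤ Delta J α β :=
  NNReal.coe_le_coe.mpr (Finset.sup_mono (Finset.product_subset_product h h))

lemma delta_le {I : Finset ℕ} {α : ℕ → Circle} {c : ℝ} (hc : 0 ≤ c)
    (h : ∀ i ∈ I, ∀ j ∈ I, ‖(α i : ℂ) * (starRingEnd ℂ) (α j : ℂ) - 1‖ ≤ c) :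
    Delta I α 1 ≤ c := by
  have key : ((I ×ˢ I).sup fun p : ℕ × ℕ =>
      ‖(α p.1 : ℂ) * (starRingEnd ℂ) (α p.2 : ℂ) -
        ((1 : ℕ → Circle) p.1 : ℂ) * (starRingEnd ℂ) ((1 : ℕ → Circle) p.2 : ℂ)‖₊)
      ≤ c.toNNReal := by
    apply Finset.sup_le
    intro p hp
    obtain ⟨h1, h2⟩ := Finset.mem_product.mp hp
    rw [← NNReal.coe_le_coe, coe_nnnorm, Real.coe_toNNReal _ hc]
    simpa using h _ h1 _ h2
  calc Delta I α 1 ≤ (c.toNNReal : ℝ) := NNReal.coe_le_coe.mpr key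
    _ = c := Real.coe_toNNReal _ hc

lemma le_delta {I : Finset ℕ} {α : ℕ → Circle} {i j : ℕ} (hi : i ∈ I) (hj : j ∈ I) :
    ‖(α i : ℂ) * (starRingEnd ℂ) (α j : ℂ) - 1‖ ≤ Delta I α 1 := by
  have key := Finset.le_sup (f := fun p : ℕ × ℕ =>
      ‖(α p.1 : ℂ) * (starRingEnd ℂ) (α p.2 : ℂ) -
        ((1 : ℕ → Circle) p.1 : ℂ) * (starRingEnd ℂ) ((1 : ℕ → Circle) p.2 : ℂ)‖₊)
    (Finset.mk_mem_product hi hj)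
  have e : ‖(α i : ℂ) * (starRingEnd ℂ) (α j : ℂ) - 1‖
      = ‖(α i : ℂ) * (starRingEnd ℂ) (α j : ℂ) -
        ((1 : ℕ → Circle) i : ℂ) * (starRingEnd ℂ) ((1 : ℕ → Circle) j : ℂ)‖ := by simp
  rw [e]
  exact le_trans (le_of_eq (coe_nnnorm _).symm) (NNReal.coe_le_coe.mpr key)


variable {X X' : Set ℕ}

lemma insert_infinite (hX : X.Infinite) : {n | n ∈ insert 0 X}.Infinite := by
  rw [Set.setOf_mem_eq]; exact hX.mono (Set.subset_insert 0 X)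

lemma nEnum_strictMono (hX : X.Infinite) : StrictMono (nEnum X) :=
  Nat.nth_strictMono (insert_infinite hX)

lemma nEnum_zero : nEnum X 0 = 0 := by
  rw [nEnum, Nat.nth_zero]
  exact Nat.sInf_eq_zero.mpr (Or.inl (by simp))

lemma nEnum_mem (hX : X.Infinite) (j : ℕ) : nEnum X j ∈ insert 0 X :=
  Nat.nth_mem_of_infinite (insert_infinite hX) j

/-- block index of a point. -/
def blk (X : Set ℕ) (i : ℕ) : ℕ :=
  letI := Classical.decPred (· ∈ insert 0 X)
  Nat.count (· ∈ insert 0 X) (i + 1) - 1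

lemma blk_eq (hX : X.Infinite) {i j : ℕ} (h : i ∈ intvl X j) : blk X i = j := by
  obtain ⟨h1, h2⟩ := Finset.mem_Ico.mp h
  unfold blk
  letI := Classical.decPred (· ∈ insert 0 X)
  have hinf := insert_infinite hX
  have e1 : Nat.count (· ∈ insert 0 X) (nEnum X j + 1) = j + 1 := by
    rw [Nat.count_succ, if_pos (nEnum_mem hX j)]
    rw [show Nat.count (· ∈ insert 0 X) (nEnum X j) = j from Nat.count_nth_of_infinite hinf j]
  have e2 : Nat.count (· ∈ insert 0 X) (i + 1) ≤ j + 1 := by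
    calc Nat.count (· ∈ insert 0 X) (i + 1)
        ≤ Nat.count (· ∈ insert 0 X) (nEnum X (j + 1)) := Nat.count_monotone _ h2
      _ = j + 1 := Nat.count_nth_of_infinite hinf (j + 1)
  have e3 : j + 1 ≤ Nat.count (· ∈ insert 0 X) (i + 1) := by
    rw [← e1]; exact Nat.count_monotone _ (by omega)
  omega

/-- position of `nEnum X' k` in the enumeration of `X`. -/
def fIdx (X X' : Set ℕ) (k : ℕ) : ℕ :=
  letI := Classical.decPred (· ∈ insert 0 X)
  Nat.count (· ∈ insert 0 X) (nEnum X' k)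

lemma nEnum_fIdx (hX : X.Infinite) (hX' : X'.Infinite) (hsub : X' ⊆ X) (k : ℕ) :
    nEnum X (fIdx X X' k) = nEnum X' k := by
  unfold fIdx nEnum
  letI := Classical.decPred (· ∈ insert 0 X)
  exact Nat.nth_count (Set.insert_subset_insert hsub (nEnum_mem hX' k))

lemma fIdx_strictMono (hX : X.Infinite) (hX' : X'.Infinite) (hsub : X' ⊆ X) :
    StrictMono (fIdx X X') := by
  intro a b hab
  have h := nEnum_strictMono hX' hab
  rw [← nEnum_fIdx hX hX' hsub a, ← nEnum_fIdx hX hX' hsub b] at h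
  exact (nEnum_strictMono hX).lt_iff_lt.mp h

lemma fIdx_zero : fIdx X X' 0 = 0 := by
  unfold fIdx
  letI := Classical.decPred (· ∈ insert 0 X)
  rw [nEnum_zero]
  exact Nat.count_zero _

lemma fIdx_le_apply (hX : X.Infinite) (hX' : X'.Infinite) (hsub : X' ⊆ X) (k : ℕ) :
    k ≤ fIdx X X' k := by
  induction k with
  | zero => omega
  | succ n ih => have := fIdx_strictMono hX hX' hsub (by omega : n < n + 1); omega

lemma intvl_nonempty (hX : X.Infinite) (j : ℕ) : (intvl X j).Nonempty :=
  Finset.nonempty_Ico.mpr (nEnum_strictMono hX (lt_add_one j))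

lemma intvl_union (hX : X.Infinite) (j : ℕ) :
    intvl X j ∪ intvl X (j + 1) = Finset.Ico (nEnum X j) (nEnum X (j + 2)) := by
  unfold intvl
  rw [show j + 1 + 1 = j + 2 from rfl]
  exact Finset.Ico_union_Ico_eq_Ico ((nEnum_strictMono hX).monotone (by omega))
    ((nEnum_strictMono hX).monotone (by omega))

lemma intvl_subset (hX : X.Infinite) (hX' : X'.Infinite) (hsub : X' ⊆ X) {j c : ℕ}
    (h1 : fIdx X X' c ≤ j) (h2 : j + 1 ≤ fIdx X X' (c + 1)) :
    intvl X j ⊆ intvl X' c := by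
  apply Finset.Ico_subset_Ico
  · rw [← nEnum_fIdx hX hX' hsub c]; exact (nEnum_strictMono hX).monotone h1
  · rw [← nEnum_fIdx hX hX' hsub (c + 1)]; exact (nEnum_strictMono hX).monotone h2

lemma subset_fIdx (hX : X.Infinite) (hX' : X'.Infinite) (hsub : X' ⊆ X) {j c : ℕ}
    (h : intvl X j ⊆ intvl X' c) : fIdx X X' c ≤ j ∧ j + 1 ≤ fIdx X X' (c + 1) := by
  unfold intvl at h
  rw [Finset.Ico_subset_Ico_iff (nEnum_strictMono hX (lt_add_one j))] at h
  obtain ⟨h1, h2⟩ := h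
  rw [← nEnum_fIdx hX hX' hsub c] at h1
  rw [← nEnum_fIdx hX hX' hsub (c + 1)] at h2
  exact ⟨(nEnum_strictMono hX).le_iff_le.mp h1, (nEnum_strictMono hX).le_iff_le.mp h2⟩

lemma exists_between {f : ℕ → ℕ} (hf : StrictMono f) (h0 : f 0 = 0) (j : ℕ) :
    ∃ c, f c ≤ j ∧ j < f (c + 1) := by
  induction j with
  | zero => exact ⟨0, by omega, by have := hf (by omega : (0:ℕ) < 0 + 1); omega⟩
  | succ n ih =>
    obtain ⟨c, h1, h2⟩ := ih
    by_cases h : n + 1 < f (c + 1)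
    · exact ⟨c, by omega, h⟩
    · exact ⟨c + 1, by omega, by have := hf (by omega : c + 1 < c + 1 + 1); omega⟩

/-- The tent map of half-width `w`. -/
def tent (w t : ℕ) : ℝ :=
  if t ≤ w then (t : ℝ) * (Real.pi / w)
  else if t ≤ 2 * w then ((2 * w - t : ℕ) : ℝ) * (Real.pi / w)
  else 0

lemma tent_zero (w : ℕ) : tent w 0 = 0 := by simp [tent]

lemma tent_top {w : ℕ} (hw : 1 ≤ w) : tent w w = Real.pi := by
  rw [tent, if_pos le_rfl]
  field_simp

lemma tent_big {w t : ℕ} (hw : 1 ≤ w) (h : 2 * w ≤ t) : tent w t = 0 := by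
  by_cases h2 : t ≤ 2 * w
  · rw [tent, if_neg (by omega), if_pos h2, show (2 * w - t : ℕ) = 0 by omega]
    simp
  · rw [tent, if_neg (by omega), if_neg h2]

lemma tent_step {w t : ℕ} (hw : 1 ≤ w) : |tent w t - tent w (t + 1)| ≤ Real.pi / w := by
  have hπ : 0 ≤ Real.pi / w := div_nonneg Real.pi_pos.le (by positivity)
  by_cases h1 : t + 1 ≤ w
  · rw [tent, if_pos (by omega), tent, if_pos h1]
    have e : (t : ℝ) * (Real.pi / w) - ((t + 1 : ℕ) : ℝ) * (Real.pi / w) = -(Real.pi / w) := by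
      push_cast; ring
    rw [e, abs_neg, _root_.abs_of_nonneg hπ]
  · by_cases h2 : t ≤ w
    · have ht : t = w := by omega
      subst ht
      rw [tent, if_pos le_rfl, tent, if_neg (by omega), if_pos (by omega)]
      have e : (t : ℝ) * (Real.pi / t) - ((2 * t - (t + 1) : ℕ) : ℝ) * (Real.pi / t)
          = Real.pi / t := by
        rw [show (2 * t - (t + 1) : ℕ) = t - 1 by omega, Nat.cast_sub hw]
        push_cast
        field_simp
        ring
      rw [e, _root_.abs_of_nonneg hπ]
    · by_cases h3 : t + 1 ≤ 2 * w
      · rw [tent, if_neg h2, if_pos (by omega), tent, if_neg (by omega), if_pos h3]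
        have e : ((2 * w - t : ℕ) : ℝ) * (Real.pi / w)
            - ((2 * w - (t + 1) : ℕ) : ℝ) * (Real.pi / w) = Real.pi / w := by
          rw [Nat.cast_sub (by omega), Nat.cast_sub (by omega)]
          push_cast; ring
        rw [e, _root_.abs_of_nonneg hπ]
      · by_cases h4 : t ≤ 2 * w
        · rw [tent, if_neg h2, if_pos h4, tent, if_neg (by omega), if_neg (by omega),
            show (2 * w - t : ℕ) = 0 by omega]
          simpa using hπ
        · rw [tent, if_neg h2, if_neg h4, tent, if_neg (by omega), if_neg (by omega)]
          simpa using hπ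

lemma tent_nonneg (w t : ℕ) : 0 ≤ tent w t := by
  have hπ : 0 ≤ Real.pi / w := div_nonneg Real.pi_pos.le (by positivity)
  unfold tent
  split
  · positivity
  · split
    · positivity
    · exact le_refl 0

end FPaux

open FPaux in
/-- if every `m` admits `k` with at least `m` of the intervals `I(X,j)`
contained in `I(X',k)`, then `F_{X'} ⊊ F_X`. -/
theorem F_proper (X X' : Set ℕ) (hX : X.Infinite) (hX' : X'.Infinite)
    (hsub : X' ⊆ X)
    (hsparse : ∀ m : ℕ, ∃ k : ℕ, ∃ s : Finset ℕ, m ≤ s.card ∧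
      ∀ j ∈ s, intvl X j ⊆ intvl X' k) :
    (∀ α : ℕ → Circle, memF X' α → memF X α) ∧
      ∃ α : ℕ → Circle, memF X α ∧ ¬ memF X' α := by
  classical
  have hfm := fIdx_strictMono hX hX' hsub
  have hf0 : fIdx X X' 0 = 0 := fIdx_zero
  constructor
  · intro α hα
    obtain ⟨K, hK⟩ : ∃ K : ℕ → ℕ, ∀ j, fIdx X X' (K j) ≤ j ∧ j < fIdx X X' (K j + 1) :=
      ⟨fun j => (exists_between hfm hf0 j).choose,
       fun j => (exists_between hfm hf0 j).choose_spec⟩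
    have hsubs : ∀ j, intvl X j ∪ intvl X (j + 1) ⊆ intvl X' (K j) ∪ intvl X' (K j + 1) := by
      intro j
      rw [intvl_union hX, intvl_union hX']
      apply Finset.Ico_subset_Ico
      · rw [← nEnum_fIdx hX hX' hsub (K j)]
        exact (nEnum_strictMono hX).monotone (hK j).1
      · rw [← nEnum_fIdx hX hX' hsub (K j + 2)]
        apply (nEnum_strictMono hX).monotone
        have h1 := (hK j).2
        have h2 := hfm (by omega : K j + 1 < K j + 2)
        omega
    have hbound : ∀ j, Delta (intvl X j ∪ intvl X (j + 1)) α 1 ≤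
        Delta (intvl X' (K j) ∪ intvl X' (K j + 1)) α 1 :=
      fun j => delta_mono (hsubs j) α 1
    have hKtend : Tendsto K atTop atTop := by
      rw [tendsto_atTop_atTop]
      intro b
      refine ⟨fIdx X X' b, fun j hj => ?_⟩
      by_contra hcon
      push_neg at hcon
      have h1 := hfm.monotone (show K j + 1 ≤ b by omega)
      have h2 := (hK j).2
      omega
    have hα' : Tendsto (fun c => Delta (intvl X' c ∪ intvl X' (c + 1)) α 1) atTop (𝓝 0) := hα
    exact squeeze_zero (fun j => delta_nonneg _ _ _) hbound (hα'.comp hKtend)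
  · -- Part 2: construction of α ∈ F_X \ F_{X'}
    have claim : ∀ K m : ℕ, ∃ c, K < c ∧ fIdx X X' c + m ≤ fIdx X X' (c + 1) := by
      intro K m
      obtain ⟨k, s, hcard, hs⟩ :=
        hsparse ((Finset.range (K + 1)).sup (fun c => fIdx X X' (c + 1) - fIdx X X' c) + m + 1)
      have hsub2 : s ⊆ Finset.Ico (fIdx X X' k) (fIdx X X' (k + 1)) := by
        intro j hj
        obtain ⟨h1, h2⟩ := subset_fIdx hX hX' hsub (hs j hj)
        exact Finset.mem_Ico.mpr ⟨h1, by omega⟩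
      have hcard2 : s.card ≤ fIdx X X' (k + 1) - fIdx X X' k := by
        have := Finset.card_le_card hsub2
        rwa [Nat.card_Ico] at this
      have hkK : K < k := by
        by_contra hcon
        push_neg at hcon
        have hle : fIdx X X' (k + 1) - fIdx X X' k ≤
            (Finset.range (K + 1)).sup (fun c => fIdx X X' (c + 1) - fIdx X X' c) :=
          Finset.le_sup (f := fun c => fIdx X X' (c + 1) - fIdx X X' c)
            (Finset.mem_range.mpr (show k < K + 1 by omega))
        omega
      have hgoal : fIdx X X' k + m ≤ fIdx X X' (k + 1) := by
        omega
      exact ⟨k, hkK, hgoal⟩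
    obtain ⟨k, hk⟩ : ∃ k : ℕ → ℕ, ∀ m, k m < k (m + 1) ∧
        fIdx X X' (k (m + 1)) + (2 * m + 5) ≤ fIdx X X' (k (m + 1) + 1) :=
      ⟨fun m => Nat.rec 0 (fun m' ih => (claim ih (2 * m' + 5)).choose) m,
       fun m => (claim _ (2 * m + 5)).choose_spec⟩
    have hkmono : StrictMono k := strictMono_nat_of_lt_succ (fun n => (hk n).1)
    have hkub : ∀ m, m ≤ k m := by
      intro m
      induction m with
      | zero => omega
      | succ n ih => have := (hk n).1; omega
    have huniq : ∀ {m m' j : ℕ},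
        fIdx X X' (k (m + 1)) ≤ j → j < fIdx X X' (k (m + 1) + 1) →
        fIdx X X' (k (m' + 1)) ≤ j → j < fIdx X X' (k (m' + 1) + 1) → m = m' := by
      intro m m' j h1 h2 h3 h4
      rcases lt_trichotomy m m' with hlt | he | hgt
      · exfalso
        have e1 : k (m + 1) + 1 ≤ k (m' + 1) := by
          have := hkmono (show m + 1 < m' + 1 by omega); omega
        have := hfm.monotone e1
        omega
      · exact he
      · exfalso
        have e1 : k (m' + 1) + 1 ≤ k (m + 1) := by
          have := hkmono (show m' + 1 < m + 1 by omega); omega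
        have := hfm.monotone e1
        omega
    obtain ⟨τ, hτ1, hτ2⟩ : ∃ τ : ℕ → ℝ,
        (∀ m j, fIdx X X' (k (m + 1)) ≤ j → j < fIdx X X' (k (m + 1) + 1) →
          τ j = tent (m + 1) (j - fIdx X X' (k (m + 1)))) ∧
        (∀ j, (∀ m, ¬(fIdx X X' (k (m + 1)) ≤ j ∧ j < fIdx X X' (k (m + 1) + 1))) →
          τ j = 0) := by
      refine ⟨fun j => if h : ∃ m, fIdx X X' (k (m + 1)) ≤ j ∧ j < fIdx X X' (k (m + 1) + 1)
          then tent (h.choose + 1) (j - fIdx X X' (k (h.choose + 1))) else 0, ?_, ?_⟩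
      · intro m j h1 h2
        have hex : ∃ m', fIdx X X' (k (m' + 1)) ≤ j ∧ j < fIdx X X' (k (m' + 1) + 1) :=
          ⟨m, h1, h2⟩
        beta_reduce
        rw [dif_pos hex]
        have hchoose := hex.choose_spec
        rw [show hex.choose = m from huniq hchoose.1 hchoose.2 h1 h2]
      · intro j hj
        exact dif_neg fun hcon => hcon.elim fun m hm => hj m hm
    have hzero_front : ∀ m j', fIdx X X' (k (m + 1)) ≤ j' + 1 →
        j' + 1 < fIdx X X' (k (m + 1) + 1) →
        ¬(fIdx X X' (k (m + 1)) ≤ j' ∧ j' < fIdx X X' (k (m + 1) + 1)) → τ (j' + 1) = 0 := by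
      intro m j' h1 h2 h3
      have hbase : fIdx X X' (k (m + 1)) = j' + 1 := by omega
      rw [hτ1 m (j' + 1) h1 h2, hbase, Nat.sub_self, tent_zero]
    have hzero_back : ∀ m j', fIdx X X' (k (m + 1)) ≤ j' →
        j' < fIdx X X' (k (m + 1) + 1) →
        ¬(j' + 1 < fIdx X X' (k (m + 1) + 1)) → τ j' = 0 := by
      intro m j' h1 h2 h3
      rw [hτ1 m j' h1 h2]
      apply tent_big (by omega)
      have := (hk m).2
      omega
    refine ⟨fun i => Circle.exp (τ (blk X i)), ?_, ?_⟩
    · -- memF X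
      show Tendsto (fun j => Delta (intvl X j ∪ intvl X (j + 1))
        (fun i => Circle.exp (τ (blk X i))) 1) atTop (𝓝 0)
      rw [Metric.tendsto_atTop]
      intro ε hε
      obtain ⟨M, hM1, hM2⟩ : ∃ M : ℕ, 1 ≤ M ∧ Real.pi / M < ε := by
        refine ⟨⌈Real.pi / ε⌉₊ + 1, by omega, ?_⟩
        have h1 := Nat.le_ceil (Real.pi / ε)
        have h2 : Real.pi / ε < ((⌈Real.pi / ε⌉₊ + 1 : ℕ) : ℝ) := by push_cast; linarith
        rw [div_lt_iff₀ (by positivity)]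
        rw [div_lt_iff₀ hε] at h2
        linarith
      refine ⟨fIdx X X' (k M + 1), fun j hj => ?_⟩
      have hstepj : |τ j - τ (j + 1)| < ε := by
        by_cases hcj : ∃ m, fIdx X X' (k (m + 1)) ≤ j ∧ j < fIdx X X' (k (m + 1) + 1)
        · obtain ⟨m, hm1, hm2⟩ := hcj
          have hmM : M ≤ m + 1 := by
            by_contra hcon
            push_neg at hcon
            have e1 : k (m + 1) + 1 ≤ k M + 1 := by
              have := hkmono.monotone (show m + 1 ≤ M by omega); omega
            have := hfm.monotone e1
            omega
          by_cases hcj1 : j + 1 < fIdx X X' (k (m + 1) + 1)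
          · rw [hτ1 m j hm1 hm2, hτ1 m (j + 1) (by omega) hcj1,
              show j + 1 - fIdx X X' (k (m + 1)) = (j - fIdx X X' (k (m + 1))) + 1 by omega]
            have hts := tent_step (w := m + 1) (t := j - fIdx X X' (k (m + 1))) (by omega)
            have hle : Real.pi / ((m + 1 : ℕ) : ℝ) ≤ Real.pi / (M : ℝ) := by
              apply div_le_div_of_nonneg_left Real.pi_pos.le
              · exact_mod_cast (by omega : 0 < M)
              · exact_mod_cast hmM
            calc |tent (m + 1) (j - fIdx X X' (k (m + 1)))
                - tent (m + 1) (j - fIdx X X' (k (m + 1)) + 1)|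
                ≤ Real.pi / ((m + 1 : ℕ) : ℝ) := hts
              _ ≤ Real.pi / (M : ℝ) := hle
              _ < ε := hM2
          · have e1 : τ j = 0 := hzero_back m j hm1 hm2 hcj1
            have e2 : τ (j + 1) = 0 := by
              by_cases hcj2 : ∃ m', fIdx X X' (k (m' + 1)) ≤ j + 1 ∧
                  j + 1 < fIdx X X' (k (m' + 1) + 1)
              · obtain ⟨m', hm1', hm2'⟩ := hcj2
                refine hzero_front m' j hm1' hm2' ?_
                rintro ⟨ha, hb⟩
                have hmm := huniq ha hb hm1 hm2
                subst hmm
                omega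
              · exact hτ2 (j + 1) (fun m' hm' => hcj2 ⟨m', hm'⟩)
            rw [e1, e2]
            simpa using hε
        · have e1 : τ j = 0 := hτ2 j (fun m hm => hcj ⟨m, hm⟩)
          have e2 : τ (j + 1) = 0 := by
            by_cases hcj2 : ∃ m', fIdx X X' (k (m' + 1)) ≤ j + 1 ∧
                j + 1 < fIdx X X' (k (m' + 1) + 1)
            · obtain ⟨m', hm1', hm2'⟩ := hcj2
              exact hzero_front m' j hm1' hm2' (fun hm => hcj ⟨m', hm⟩)
            · exact hτ2 (j + 1) (fun m' hm' => hcj2 ⟨m', hm'⟩)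
          rw [e1, e2]
          simpa using hε
      have hD : Delta (intvl X j ∪ intvl X (j + 1))
          (fun i => Circle.exp (τ (blk X i))) 1 ≤ |τ j - τ (j + 1)| := by
        apply delta_le (abs_nonneg _)
        intro i hi i' hi'
        have hb : ∀ i'' ∈ intvl X j ∪ intvl X (j + 1), blk X i'' = j ∨ blk X i'' = j + 1 := by
          intro i'' hi''
          rcases Finset.mem_union.mp hi'' with h | h
          · exact Or.inl (blk_eq hX h)
          · exact Or.inr (blk_eq hX h)
        refine le_trans (norm_circle_exp (τ (blk X i)) (τ (blk X i'))) ?_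
        rcases hb i hi with e1 | e1 <;> rcases hb i' hi' with e2 | e2 <;> rw [e1, e2] <;>
          simp [abs_sub_comm]
      rw [Real.dist_eq, sub_zero, abs_of_nonneg (delta_nonneg _ _ _)]
      exact lt_of_le_of_lt hD hstepj
    · -- ¬ memF X'
      intro hmem
      have hmem' : Tendsto (fun c => Delta (intvl X' c ∪ intvl X' (c + 1))
          (fun i => Circle.exp (τ (blk X i))) 1) atTop (𝓝 0) := hmem
      rw [Metric.tendsto_atTop] at hmem'
      obtain ⟨N, hN⟩ := hmem' 1 one_pos
      have hc := (hk N).2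
      obtain ⟨i0, hi0⟩ := intvl_nonempty hX (fIdx X X' (k (N + 1)))
      obtain ⟨i1, hi1⟩ := intvl_nonempty hX (fIdx X X' (k (N + 1)) + (N + 1))
      have hb0 : blk X i0 = fIdx X X' (k (N + 1)) := blk_eq hX hi0
      have hb1 : blk X i1 = fIdx X X' (k (N + 1)) + (N + 1) := blk_eq hX hi1
      have hτa : τ (fIdx X X' (k (N + 1))) = 0 := by
        rw [hτ1 N _ le_rfl (by omega), Nat.sub_self, tent_zero]
      have hτb : τ (fIdx X X' (k (N + 1)) + (N + 1)) = Real.pi := by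
        rw [hτ1 N _ (by omega) (by omega),
          show fIdx X X' (k (N + 1)) + (N + 1) - fIdx X X' (k (N + 1)) = N + 1 by omega]
        exact tent_top (by omega)
      have hmem0 : i0 ∈ intvl X' (k (N + 1)) ∪ intvl X' (k (N + 1) + 1) :=
        Finset.mem_union_left _ (intvl_subset hX hX' hsub le_rfl (by omega) hi0)
      have hmem1 : i1 ∈ intvl X' (k (N + 1)) ∪ intvl X' (k (N + 1) + 1) :=
        Finset.mem_union_left _ (intvl_subset hX hX' hsub (by omega) (by omega) hi1)
      have h2le := le_delta (α := fun i => Circle.exp (τ (blk X i))) hmem0 hmem1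
      have hval : ‖((fun i => Circle.exp (τ (blk X i))) i0 : ℂ) *
          (starRingEnd ℂ) (((fun i => Circle.exp (τ (blk X i))) i1 : Circle) : ℂ) - 1‖ = 2 := by
        simp only [hb0, hb1, hτa, hτb]
        rw [Circle.exp_zero, Circle.coe_exp, Complex.exp_pi_mul_I]
        simp
        norm_num
      rw [hval] at h2le
      have hNc := hN (k (N + 1)) (by have := hkub (N + 1); omega)
      rw [Real.dist_eq, sub_zero,
        abs_of_nonneg (delta_nonneg _ _ _)] at hNc
      linarith
end
end

section
/- Let A be a C*-algebra with a sequence of projections r_i witnessing Hypothesis (P). Then for every m in the multiplier algebra M(A) there exist an infinite subset X ⊆ ℕ and elements d ∈ DD_X(A) and a ∈ A (identified with its canonical image in M(A)) such that m = d + a. -/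
open Filter Topology MultiplierAlgebra

noncomputable section

set_option maxHeartbeats 1000000
set_option synthInstance.maxHeartbeats 1000000

/-- Hypothesis (P): a sequence of mutually orthogonal projections `r_i` with
`r_i A r_j ≠ 0` for all `i, j`, whose partial sums form an approximate unit. -/
structure IsHypP {A : Type*} [NonUnitalCStarAlgebra A] (r : ℕ → A) : Prop where
  selfadj : ∀ i, star (r i) = r i
  idem : ∀ i, r i * r i = r i
  orth : ∀ i j, i ≠ j → r i * r j = 0
  nonzero : ∀ i j, ∃ a : A, r i * a * r j ≠ 0
  approx : ∀ a : A,
    Tendsto (fun n => ‖(∑ i ∈ Finset.range n, r i) * a - a‖) atTop (𝓝 0)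

section DD

variable {A : Type*} [NonUnitalCStarAlgebra A]

/-- `p_I = ∑_{i ∈ I} r_i`. -/
def pI (r : ℕ → A) (I : Finset ℕ) : A := ∑ i ∈ I, r i

/-- The set `DD_X(A)` of multipliers `m` with `p_{I(X,i)} · m · p_{I(X,j)} = 0`
whenever `|i - j| ≥ 2`. -/
def DD (r : ℕ → A) (X : Set ℕ) : Set 𝓜(ℂ, A) :=
  {m | ∀ i j : ℕ, 2 ≤ |(i : ℤ) - (j : ℤ)| →
    ((pI r (intvl X i) : A) : 𝓜(ℂ, A)) * m * ((pI r (intvl X j) : A) : 𝓜(ℂ, A)) = 0}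

end DD

namespace MultDecomp

variable {A : Type*} [NonUnitalCStarAlgebra A] {r : ℕ → A}

lemma eq_zero_of_mul_right_all {c : A} (h : ∀ y : A, c * y = 0) : c = 0 := by
  have h1 : ‖c‖ * ‖c‖ = 0 := by
    rw [← CStarRing.norm_self_mul_star (x := c), h (star c), norm_zero]
  have := mul_self_eq_zero.mp h1
  simpa using norm_eq_zero.mp this

lemma eq_zero_of_mul_left_all {c : A} (h : ∀ y : A, y * c = 0) : c = 0 := by
  have h1 : ‖c‖ * ‖c‖ = 0 := by
    rw [← CStarRing.norm_star_mul_self (x := c), h (star c), norm_zero]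
  have := mul_self_eq_zero.mp h1
  simpa using norm_eq_zero.mp this

lemma fst_mul (m : 𝓜(ℂ, A)) (a b : A) : m.fst (a * b) = m.fst a * b := by
  have key : ∀ y : A, y * (m.fst (a * b) - m.fst a * b) = 0 := by
    intro y
    rw [mul_sub, ← m.central, ← mul_assoc, m.central, mul_assoc, sub_self]
  exact sub_eq_zero.mp (eq_zero_of_mul_left_all key)

lemma snd_mul (m : 𝓜(ℂ, A)) (a b : A) : m.snd (a * b) = a * m.snd b := by
  have key : ∀ y : A, (m.snd (a * b) - a * m.snd b) * y = 0 := by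
    intro y
    rw [sub_mul, m.central, mul_assoc, ← m.central, ← mul_assoc, sub_self]
  exact sub_eq_zero.mp (eq_zero_of_mul_right_all key)

lemma mul_coe (m : 𝓜(ℂ, A)) (a : A) : m * (a : 𝓜(ℂ, A)) = ((m.fst a : A) : 𝓜(ℂ, A)) := by
  ext : 1
  refine Prod.ext ?_ ?_
  · ext x
    simpa [DoubleCentralizer.mul_fst] using fst_mul m a x
  · ext x
    simpa [DoubleCentralizer.mul_snd] using m.central x a

lemma coe_mul' (m : 𝓜(ℂ, A)) (a : A) : (a : 𝓜(ℂ, A)) * m = ((m.snd a : A) : 𝓜(ℂ, A)) := by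
  ext : 1
  refine Prod.ext ?_ ?_
  · ext x
    simpa [DoubleCentralizer.mul_fst] using (m.central a x).symm
  · ext x
    simpa [DoubleCentralizer.mul_snd] using snd_mul m x a

lemma norm_coe (a : A) : ‖(a : 𝓜(ℂ, A))‖ = ‖a‖ := by
  rw [← DoubleCentralizer.norm_fst, DoubleCentralizer.coe_fst,
    ContinuousLinearMap.opNorm_mul_apply]

lemma coe_add' (a b : A) : ((a + b : A) : 𝓜(ℂ, A)) = (a : 𝓜(ℂ, A)) + b :=
  map_add (DoubleCentralizer.coeHom (𝕜 := ℂ) (A := A)) a b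

lemma coe_mul_coe (a b : A) : ((a * b : A) : 𝓜(ℂ, A)) = (a : 𝓜(ℂ, A)) * b :=
  map_mul (DoubleCentralizer.coeHom (𝕜 := ℂ) (A := A)) a b

lemma coe_sub' (a b : A) : ((a - b : A) : 𝓜(ℂ, A)) = (a : 𝓜(ℂ, A)) - b :=
  map_sub (DoubleCentralizer.coeHom (𝕜 := ℂ) (A := A)) a b

lemma coe_zero' : ((0 : A) : 𝓜(ℂ, A)) = 0 :=
  map_zero (DoubleCentralizer.coeHom (𝕜 := ℂ) (A := A))

lemma continuous_coe' : Continuous ((↑) : A → 𝓜(ℂ, A)) :=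
  (AddMonoidHomClass.isometry_of_norm (DoubleCentralizer.coeHom (𝕜 := ℂ) (A := A))
    norm_coe).continuous

lemma coe_tsum {f : ℕ → A} (hf : Summable f) :
    ((∑' k, f k : A) : 𝓜(ℂ, A)) = ∑' k, ((f k : A) : 𝓜(ℂ, A)) := by
  simpa using hf.map_tsum (DoubleCentralizer.coeHom (𝕜 := ℂ) (A := A)) continuous_coe'

lemma summable_coe {f : ℕ → A} (hf : Summable f) :
    Summable (fun k => ((f k : A) : 𝓜(ℂ, A))) :=
  hf.map (DoubleCentralizer.coeHom (𝕜 := ℂ) (A := A)) continuous_coe'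

/-- partial sums -/
def P (r : ℕ → A) (n : ℕ) : A := ∑ i ∈ Finset.range n, r i

lemma P_mul (hr : IsHypP r) (a b : ℕ) : P r a * P r b = P r (min a b) := by
  unfold P
  rw [Finset.sum_mul_sum]
  have key : ∀ i ∈ Finset.range a, (∑ j ∈ Finset.range b, r i * r j)
      = if i < b then r i else 0 := by
    intro i _
    by_cases hib : i < b
    · rw [if_pos hib, Finset.sum_eq_single i
        (fun j _ hj => hr.orth i j (fun h => hj h.symm))
        (fun h => absurd (Finset.mem_range.mpr hib) h), hr.idem]
    · rw [if_neg hib]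
      exact Finset.sum_eq_zero fun j hj =>
        hr.orth i j (by rintro rfl; exact hib (Finset.mem_range.mp hj))
  rw [Finset.sum_congr rfl key, Finset.sum_ite, Finset.sum_const_zero, add_zero]
  apply Finset.sum_congr _ (fun _ _ => rfl)
  ext x
  simp [Nat.lt_min]

lemma P_star (hr : IsHypP r) (n : ℕ) : star (P r n) = P r n := by
  unfold P
  rw [star_sum]
  exact Finset.sum_congr rfl fun i _ => hr.selfadj i

lemma approx_right (hr : IsHypP r) (a : A) :
    Tendsto (fun n => ‖a * P r n - a‖) atTop (𝓝 0) := by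
  have h := hr.approx (star a)
  convert h using 2 with n
  rw [← norm_star]
  congr 1
  rw [star_sub, star_mul, P_star hr]
  rfl

end MultDecomp

open MultDecomp in
/-- every multiplier `m ∈ M(A)` decomposes as `m = d + a` with
`d ∈ DD_X(A)` for some infinite `X ⊆ ℕ` and `a ∈ A`. -/
theorem multiplier_decomposition (A : Type*) [NonUnitalCStarAlgebra A] (r : ℕ → A)
    (hr : IsHypP r) (m : 𝓜(ℂ, A)) :
    ∃ X : Set ℕ, X.Infinite ∧ ∃ d ∈ DD r X, ∃ a : A, m = d + (a : 𝓜(ℂ, A)) := by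
  classical
  -- Step: given `prev`, find a larger `nxt` making two norms small.
  have step : ∀ ε : ℝ, 0 < ε → ∀ prev : ℕ, ∃ nxt, prev < nxt ∧
      ‖m * ((P r prev : A) : 𝓜(ℂ, A)) -
        ((P r nxt : A) : 𝓜(ℂ, A)) * (m * ((P r prev : A) : 𝓜(ℂ, A)))‖ ≤ ε ∧
      ‖((P r prev : A) : 𝓜(ℂ, A)) * m -
        (((P r prev : A) : 𝓜(ℂ, A)) * m) * ((P r nxt : A) : 𝓜(ℂ, A))‖ ≤ ε := by
    intro ε hε prev
    have h1 := (hr.approx (m.fst (P r prev))).eventually_le_const hε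
    have h2 := (approx_right hr (m.snd (P r prev))).eventually_le_const hε
    obtain ⟨nxt, ⟨hb1, hb2⟩, hlt⟩ := ((h1.and h2).and (eventually_gt_atTop prev)).exists
    refine ⟨nxt, hlt, ?_, ?_⟩
    · rw [mul_coe m (P r prev), ← MultDecomp.coe_mul_coe, ← coe_sub', norm_coe]
      rw [norm_sub_rev]
      exact hb1
    · rw [coe_mul' m (P r prev), ← MultDecomp.coe_mul_coe, ← coe_sub', norm_coe]
      rw [norm_sub_rev]
      exact hb2
  have hstep : ∀ k prev : ℕ, ∃ nxt, prev < nxt ∧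
      ‖m * ((P r prev : A) : 𝓜(ℂ, A)) -
        ((P r nxt : A) : 𝓜(ℂ, A)) * (m * ((P r prev : A) : 𝓜(ℂ, A)))‖ ≤ (2:ℝ)⁻¹ ^ k ∧
      ‖((P r prev : A) : 𝓜(ℂ, A)) * m -
        (((P r prev : A) : 𝓜(ℂ, A)) * m) * ((P r nxt : A) : 𝓜(ℂ, A))‖ ≤ (2:ℝ)⁻¹ ^ k :=
    fun k prev => step _ (by positivity) prev
  -- the recursively chosen sequence
  set n : ℕ → ℕ := fun k => Nat.rec 0 (fun k prev => (hstep k prev).choose) k with hndef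
  have hn0 : n 0 = 0 := rfl
  have hlt : ∀ k, n k < n (k + 1) := fun k => (hstep k (n k)).choose_spec.1
  have hbnd1 : ∀ k, ‖m * ((P r (n k) : A) : 𝓜(ℂ, A)) -
      ((P r (n (k+1)) : A) : 𝓜(ℂ, A)) * (m * ((P r (n k) : A) : 𝓜(ℂ, A)))‖ ≤ (2:ℝ)⁻¹ ^ k :=
    fun k => (hstep k (n k)).choose_spec.2.1
  have hbnd2 : ∀ k, ‖((P r (n k) : A) : 𝓜(ℂ, A)) * m -
      (((P r (n k) : A) : 𝓜(ℂ, A)) * m) * ((P r (n (k+1)) : A) : 𝓜(ℂ, A))‖ ≤ (2:ℝ)⁻¹ ^ k :=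
    fun k => (hstep k (n k)).choose_spec.2.2
  have hmono : StrictMono n := strictMono_nat_of_lt_succ hlt
  set X : Set ℕ := Set.range (fun k => n (k + 1)) with hXdef
  have hXinf : X.Infinite :=
    Set.infinite_range_of_injective (fun a b h => Nat.succ_injective (hmono.injective h))
  have hrange : insert 0 X = Set.range n := by
    ext x
    simp only [Set.mem_insert_iff, Set.mem_range, hXdef]
    constructor
    · rintro (rfl | ⟨k, rfl⟩)
      exacts [⟨0, hn0⟩, ⟨k + 1, rfl⟩]
    · rintro ⟨k, rfl⟩
      cases k with
      | zero => exact Or.inl hn0.symm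
      | succ k => exact Or.inr ⟨k, rfl⟩
  have hinf : {x | x ∈ insert 0 X}.Infinite := by
    rw [Set.setOf_mem_eq, hrange]
    exact Set.infinite_range_of_injective hmono.injective
  have hnth : ∀ j, nEnum X j = n j := by
    have key : Nat.nth (· ∈ insert 0 X) = n := by
      refine ((Nat.nth_strictMono hinf).range_inj hmono).mp ?_
      rw [Nat.range_nth_of_infinite hinf, Set.setOf_mem_eq, hrange]
    exact fun j => congrFun key j
  -- the block projections
  set q : ℕ → A := fun j => pI r (intvl X j) with hqdef
  have hq : ∀ j, q j = P r (n (j + 1)) - P r (n j) := by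
    intro j
    show pI r (intvl X j) = _
    unfold intvl pI
    rw [hnth, hnth, Finset.sum_Ico_eq_sub _ (hmono.monotone (Nat.le_succ j))]
    rfl
  have hninc : Monotone n := hmono.monotone
  have hqP : ∀ j k, k ≤ j → q j * P r (n k) = 0 := by
    intro j k hkj
    rw [hq, sub_mul, P_mul hr, P_mul hr,
      min_eq_right (hninc (by omega : k ≤ j + 1)), min_eq_right (hninc hkj), sub_self]
  have hPq : ∀ j k, k ≤ j → P r (n k) * q j = 0 := by
    intro j k hkj
    rw [hq, mul_sub, P_mul hr, P_mul hr,
      min_eq_left (hninc (by omega : k ≤ j + 1)), min_eq_left (hninc hkj), sub_self]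
  have hqP' : ∀ j k, j + 1 ≤ k → q j * P r (n k) = q j := by
    intro j k hjk
    rw [hq, sub_mul, P_mul hr, P_mul hr,
      min_eq_left (hninc hjk), min_eq_left (hninc (by omega : j ≤ k)), ← hq]
  have hPq' : ∀ j k, j + 1 ≤ k → P r (n k) * q j = q j := by
    intro j k hjk
    rw [hq, mul_sub, P_mul hr, P_mul hr,
      min_eq_right (hninc hjk), min_eq_right (hninc (by omega : j ≤ k)), ← hq]
  have hqq : ∀ i j, i ≠ j → q i * q j = 0 := by
    intro i j hij
    rcases lt_or_gt_of_ne hij with h | h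
    · rw [hq j, mul_sub, hqP' i (j + 1) (by omega), hqP' i j (by omega), sub_self]
    · rw [hq j, mul_sub, hqP i (j + 1) (by omega), hqP i j (by omega), sub_self]
  have hqidem : ∀ j, q j * q j = q j := by
    intro j
    nth_rewrite 2 [hq j]
    rw [mul_sub, hqP' j (j + 1) le_rfl, hqP j j le_rfl, sub_zero]
  have hqstar : ∀ j, star (q j) = q j := by
    intro j
    rw [hq, star_sub, P_star hr, P_star hr, ← hq]
  have hqnorm : ∀ j, ‖q j‖ ≤ 1 := by
    intro j
    have h1 := CStarRing.norm_star_mul_self (x := q j)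
    rw [hqstar, hqidem] at h1
    nlinarith [norm_nonneg (q j)]
  -- the two series of "far off-diagonal" corner terms
  set cL : ℕ → A := fun k => P r (n (k + 1)) * m.fst (q (k + 2)) with hcLdef
  set cR : ℕ → A := fun k => m.snd (q (k + 2)) * P r (n (k + 1)) with hcRdef
  have hcL : ∀ k, ((cL k : A) : 𝓜(ℂ, A)) =
      ((P r (n (k + 1)) : A) : 𝓜(ℂ, A)) * m * ((q (k + 2) : A) : 𝓜(ℂ, A)) := by
    intro k
    simp only [hcLdef]
    rw [MultDecomp.coe_mul_coe, ← mul_coe, mul_assoc]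
  have hcR : ∀ k, ((cR k : A) : 𝓜(ℂ, A)) =
      ((q (k + 2) : A) : 𝓜(ℂ, A)) * m * ((P r (n (k + 1)) : A) : 𝓜(ℂ, A)) := by
    intro k
    simp only [hcRdef]
    rw [MultDecomp.coe_mul_coe, ← coe_mul']
  have hbL : ∀ k, ‖cL k‖ ≤ (2:ℝ)⁻¹ ^ (k + 1) := by
    intro k
    have hz : ((P r (n (k + 2)) : A) : 𝓜(ℂ, A)) * ((q (k + 2) : A) : 𝓜(ℂ, A)) = 0 := by
      rw [← MultDecomp.coe_mul_coe, hPq (k + 2) (k + 2) le_rfl, coe_zero']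
    rw [← norm_coe, hcL]
    calc ‖((P r (n (k + 1)) : A) : 𝓜(ℂ, A)) * m * ((q (k + 2) : A) : 𝓜(ℂ, A))‖
        = ‖(((P r (n (k + 1)) : A) : 𝓜(ℂ, A)) * m -
            (((P r (n (k + 1)) : A) : 𝓜(ℂ, A)) * m) * ((P r (n (k + 2)) : A) : 𝓜(ℂ, A))) *
            ((q (k + 2) : A) : 𝓜(ℂ, A))‖ := by
          rw [sub_mul, mul_assoc (((P r (n (k + 1)) : A) : 𝓜(ℂ, A)) * m), hz, mul_zero, sub_zero]
      _ ≤ ‖((P r (n (k + 1)) : A) : 𝓜(ℂ, A)) * m -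
            (((P r (n (k + 1)) : A) : 𝓜(ℂ, A)) * m) * ((P r (n (k + 2)) : A) : 𝓜(ℂ, A))‖ *
            ‖((q (k + 2) : A) : 𝓜(ℂ, A))‖ := norm_mul_le _ _
      _ ≤ (2:ℝ)⁻¹ ^ (k + 1) * 1 := by
          refine mul_le_mul (hbnd2 (k + 1)) ?_ (norm_nonneg _) (by positivity)
          rw [norm_coe]; exact hqnorm _
      _ = (2:ℝ)⁻¹ ^ (k + 1) := mul_one _
  have hbR : ∀ k, ‖cR k‖ ≤ (2:ℝ)⁻¹ ^ (k + 1) := by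
    intro k
    have hz : ((q (k + 2) : A) : 𝓜(ℂ, A)) * ((P r (n (k + 2)) : A) : 𝓜(ℂ, A)) = 0 := by
      rw [← MultDecomp.coe_mul_coe, hqP (k + 2) (k + 2) le_rfl, coe_zero']
    rw [← norm_coe, hcR]
    calc ‖((q (k + 2) : A) : 𝓜(ℂ, A)) * m * ((P r (n (k + 1)) : A) : 𝓜(ℂ, A))‖
        = ‖((q (k + 2) : A) : 𝓜(ℂ, A)) *
            (m * ((P r (n (k + 1)) : A) : 𝓜(ℂ, A)) -
              ((P r (n (k + 2)) : A) : 𝓜(ℂ, A)) * (m * ((P r (n (k + 1)) : A) : 𝓜(ℂ, A))))‖ := by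
          rw [mul_sub, ← mul_assoc, ← mul_assoc, hz, zero_mul, sub_zero]
      _ ≤ ‖((q (k + 2) : A) : 𝓜(ℂ, A))‖ *
            ‖m * ((P r (n (k + 1)) : A) : 𝓜(ℂ, A)) -
              ((P r (n (k + 2)) : A) : 𝓜(ℂ, A)) * (m * ((P r (n (k + 1)) : A) : 𝓜(ℂ, A)))‖ :=
          norm_mul_le _ _
      _ ≤ 1 * ((2:ℝ)⁻¹ ^ (k + 1)) := by
          refine mul_le_mul ?_ (hbnd1 (k + 1)) (norm_nonneg _) (by positivity)
          rw [norm_coe]; exact hqnorm _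
      _ = (2:ℝ)⁻¹ ^ (k + 1) := one_mul _
  have hgeo : Summable (fun k : ℕ => (2:ℝ)⁻¹ ^ (k + 1)) :=
    (summable_geometric_of_lt_one (by norm_num) (by norm_num)).comp_injective Nat.succ_injective
  have hsL : Summable cL := Summable.of_norm_bounded hgeo hbL
  have hsR : Summable cR := Summable.of_norm_bounded hgeo hbR
  set a : A := (∑' k, cL k) + ∑' k, cR k with hadef
  set d : 𝓜(ℂ, A) := m - (a : 𝓜(ℂ, A)) with hddef
  have hacoe : ((a : A) : 𝓜(ℂ, A)) =
      (∑' k, ((cL k : A) : 𝓜(ℂ, A))) + ∑' k, ((cR k : A) : 𝓜(ℂ, A)) := by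
    rw [hadef, coe_add', coe_tsum hsL, coe_tsum hsR]
  have hsLc := summable_coe hsL
  have hsRc := summable_coe hsR
  refine ⟨X, hXinf, d, ?_, a, by rw [hddef]; abel⟩
  intro i j hij
  show ((q i : A) : 𝓜(ℂ, A)) * d * ((q j : A) : 𝓜(ℂ, A)) = 0
  have termL : ∀ k, ((q i : A) : 𝓜(ℂ, A)) * ((cL k : A) : 𝓜(ℂ, A)) * ((q j : A) : 𝓜(ℂ, A)) =
      ((q i * P r (n (k + 1)) : A) : 𝓜(ℂ, A)) * m * ((q (k + 2) * q j : A) : 𝓜(ℂ, A)) := by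
    intro k
    rw [hcL, MultDecomp.coe_mul_coe, MultDecomp.coe_mul_coe]
    simp only [mul_assoc]
  have termR : ∀ k, ((q i : A) : 𝓜(ℂ, A)) * ((cR k : A) : 𝓜(ℂ, A)) * ((q j : A) : 𝓜(ℂ, A)) =
      ((q i * q (k + 2) : A) : 𝓜(ℂ, A)) * m * ((P r (n (k + 1)) * q j : A) : 𝓜(ℂ, A)) := by
    intro k
    rw [hcR, MultDecomp.coe_mul_coe, MultDecomp.coe_mul_coe]
    simp only [mul_assoc]
  have key : ((q i : A) : 𝓜(ℂ, A)) * ((a : A) : 𝓜(ℂ, A)) * ((q j : A) : 𝓜(ℂ, A)) =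
      ((q i : A) : 𝓜(ℂ, A)) * m * ((q j : A) : 𝓜(ℂ, A)) := by
    rw [hacoe, mul_add, add_mul]
    rw [← hsLc.tsum_mul_left ((q i : A) : 𝓜(ℂ, A)),
      ← (hsLc.mul_left _).tsum_mul_right ((q j : A) : 𝓜(ℂ, A)),
      ← hsRc.tsum_mul_left ((q i : A) : 𝓜(ℂ, A)),
      ← (hsRc.mul_left _).tsum_mul_right ((q j : A) : 𝓜(ℂ, A))]
    have hcase : i + 2 ≤ j ∨ j + 2 ≤ i := by
      rcases abs_cases ((i : ℤ) - (j : ℤ)) with ⟨h1, _⟩ | ⟨h1, _⟩ <;> omega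
    rcases hcase with hc | hc
    · have hL : (∑' k, ((q i : A) : 𝓜(ℂ, A)) * ((cL k : A) : 𝓜(ℂ, A)) * ((q j : A) : 𝓜(ℂ, A)))
          = ((q i : A) : 𝓜(ℂ, A)) * m * ((q j : A) : 𝓜(ℂ, A)) := by
        rw [tsum_eq_single (j - 2) ?_]
        · rw [termL, show j - 2 + 2 = j from by omega, hqidem j,
            hqP' i (j - 2 + 1) (by omega)]
        · intro k hk
          rw [termL, hqq (k + 2) j (by omega), coe_zero', mul_zero]
      have hR : (∑' k, ((q i : A) : 𝓜(ℂ, A)) * ((cR k : A) : 𝓜(ℂ, A)) * ((q j : A) : 𝓜(ℂ, A)))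
          = 0 := by
        rw [tsum_congr (fun k => ?_), tsum_zero]
        by_cases hik : i = k + 2
        · rw [termR, hPq j (k + 1) (by omega), coe_zero', mul_zero]
        · rw [termR, hqq i (k + 2) hik, coe_zero', zero_mul, zero_mul]
      rw [hL, hR, add_zero]
    · have hL : (∑' k, ((q i : A) : 𝓜(ℂ, A)) * ((cL k : A) : 𝓜(ℂ, A)) * ((q j : A) : 𝓜(ℂ, A)))
          = 0 := by
        rw [tsum_congr (fun k => ?_), tsum_zero]
        by_cases hjk : j = k + 2
        · rw [termL, hqP i (k + 1) (by omega), coe_zero', zero_mul, zero_mul]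
        · rw [termL, hqq (k + 2) j (fun h => hjk h.symm), coe_zero', mul_zero]
      have hR : (∑' k, ((q i : A) : 𝓜(ℂ, A)) * ((cR k : A) : 𝓜(ℂ, A)) * ((q j : A) : 𝓜(ℂ, A)))
          = ((q i : A) : 𝓜(ℂ, A)) * m * ((q j : A) : 𝓜(ℂ, A)) := by
        rw [tsum_eq_single (i - 2) ?_]
        · rw [termR, show i - 2 + 2 = i from by omega, hqidem i,
            hPq' j (i - 2 + 1) (by omega)]
        · intro k hk
          rw [termR, hqq i (k + 2) (by omega), coe_zero', zero_mul, zero_mul]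
      rw [hL, hR, zero_add]
  rw [hddef, mul_sub, sub_mul, key, sub_self]

end
end

section
/- Let A₀ be a unital C*-algebra containing mutually orthogonal projections q_0, …, q_{n−1} with ∑_{i<n} q_i = 1 and q_i·A₀·q_j ≠ {0} for all i, j < n. For α : {0,…,n−1} → 𝕋 let u_α = ∑_{i<n} α(i)·q_i (a unitary of A₀). Then for all α, β : {0,…,n−1} → 𝕋, with I = {0,…,n−1}: Δ_I(α,β) ≤ sup_{a ∈ A₀, ‖a‖ ≤ 1} ‖u_α·a·u_α* − u_β·a·u_β*‖ ≤ 2·Δ_I(α,β). -/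
open Filter Topology MultiplierAlgebra

noncomputable section

section helpers
variable {A₀ : Type*} [CStarAlgebra A₀] {n : ℕ} {q : ℕ → A₀}

lemma qmul_diag (hidem : ∀ i < n, q i * q i = q i)
    (horth : ∀ i < n, ∀ j < n, i ≠ j → q i * q j = 0)
    (c d : ℕ → ℂ) :
    (∑ i ∈ Finset.range n, c i • q i) * (∑ j ∈ Finset.range n, d j • q j)
      = ∑ i ∈ Finset.range n, (c i * d i) • q i := by
  rw [Finset.sum_mul_sum]
  refine Finset.sum_congr rfl fun i hi => ?_
  rw [Finset.sum_eq_single i]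
  · rw [smul_mul_smul_comm, hidem i (Finset.mem_range.mp hi)]
  · intro j hj hne
    rw [smul_mul_smul_comm, horth i (Finset.mem_range.mp hi) j (Finset.mem_range.mp hj)
      (by exact fun h => hne h.symm), smul_zero]
  · intro h; exact absurd hi h

lemma sum_mul_qi (horth : ∀ i < n, ∀ j < n, i ≠ j → q i * q j = 0)
    (hidem : ∀ i < n, q i * q i = q i) (c : ℕ → ℂ) {i : ℕ} (hi : i < n) :
    (∑ k ∈ Finset.range n, c k • q k) * q i = c i • q i := by
  rw [Finset.sum_mul, Finset.sum_eq_single i]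
  · rw [smul_mul_assoc, hidem i hi]
  · intro k hk hne
    rw [smul_mul_assoc, horth k (Finset.mem_range.mp hk) i hi hne, smul_zero]
  · intro h; exact absurd (Finset.mem_range.mpr hi) h

lemma qi_mul_sum (horth : ∀ i < n, ∀ j < n, i ≠ j → q i * q j = 0)
    (hidem : ∀ i < n, q i * q i = q i) (c : ℕ → ℂ) {i : ℕ} (hi : i < n) :
    q i * (∑ k ∈ Finset.range n, c k • q k) = c i • q i := by
  rw [Finset.mul_sum, Finset.sum_eq_single i]
  · rw [mul_smul_comm, hidem i hi]
  · intro k hk hne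
    rw [mul_smul_comm, horth i hi k (Finset.mem_range.mp hk) (fun h => hne h.symm), smul_zero]
  · intro h; exact absurd (Finset.mem_range.mpr hi) h

lemma star_sum_q (hsa : ∀ i < n, star (q i) = q i) (c : ℕ → ℂ) :
    star (∑ i ∈ Finset.range n, c i • q i)
      = ∑ i ∈ Finset.range n, (starRingEnd ℂ) (c i) • q i := by
  rw [star_sum]
  refine Finset.sum_congr rfl fun i hi => ?_
  rw [star_smul, hsa i (Finset.mem_range.mp hi)]
  rfl

lemma norm_sum_q_le (hsa : ∀ i < n, star (q i) = q i)
    (hidem : ∀ i < n, q i * q i = q i)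
    (horth : ∀ i < n, ∀ j < n, i ≠ j → q i * q j = 0)
    (hsum : ∑ i ∈ Finset.range n, q i = 1)
    {c : ℕ → ℂ} {M : ℝ} (hM : 0 ≤ M) (hc : ∀ i < n, ‖c i‖ ≤ M) :
    ‖∑ i ∈ Finset.range n, c i • q i‖ ≤ M := by
  letI : PartialOrder A₀ := CStarAlgebra.spectralOrder A₀
  letI : StarOrderedRing A₀ := CStarAlgebra.spectralOrderedRing A₀
  set x := ∑ i ∈ Finset.range n, c i • q i with hx
  have hxx : star x * x
      = ∑ i ∈ Finset.range n, ((starRingEnd ℂ) (c i) * c i) • q i := by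
    rw [hx, star_sum_q hsa, qmul_diag hidem horth]
  have key : star x * x ≤ ((M^2 : ℝ) : ℂ) • (1 : A₀) := by
    rw [← sub_nonneg]
    have h1 : ((M^2 : ℝ) : ℂ) • (1 : A₀)
        = ∑ i ∈ Finset.range n, ((M^2 : ℝ) : ℂ) • q i := by
      rw [← Finset.smul_sum, hsum]
    rw [hxx, h1, ← Finset.sum_sub_distrib]
    refine Finset.sum_nonneg fun i hi => ?_
    have hi' := Finset.mem_range.mp hi
    have hqi : q i = star (q i) * q i := by
      rw [hsa i hi', hidem i hi']
    rw [← sub_smul]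
    have hconj : (starRingEnd ℂ) (c i) * c i = ((‖c i‖^2 : ℝ) : ℂ) := by
      rw [mul_comm, Complex.mul_conj']
      norm_cast
    have hnn : ((M^2 : ℝ) : ℂ) - (starRingEnd ℂ) (c i) * c i
        = ((M^2 - ‖c i‖^2 : ℝ) : ℂ) := by
      rw [hconj]; push_cast; ring
    set r : ℝ := M^2 - ‖c i‖^2 with hr
    have hr0 : 0 ≤ r := by nlinarith [hc i hi', norm_nonneg (c i)]
    have hterm : ((r : ℝ) : ℂ) • q i
        = star (((Real.sqrt r : ℝ) : ℂ) • q i) * (((Real.sqrt r : ℝ) : ℂ) • q i) := by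
      rw [star_smul, smul_mul_smul_comm, ← hqi]
      congr 1
      rw [Complex.star_def, Complex.conj_ofReal]
      norm_cast
      rw [Real.mul_self_sqrt hr0]
    rw [hnn, hterm]
    exact star_mul_self_nonneg _
  have hone : ‖(1 : A₀)‖ ≤ 1 := by
    have h : ‖(1:A₀)‖ * ‖(1:A₀)‖ = ‖(1:A₀)‖ := by
      rw [← CStarRing.norm_star_mul_self, star_one, one_mul]
    nlinarith [norm_nonneg (1:A₀)]
  have h2 : ‖star x * x‖ ≤ M^2 := by
    refine (CStarAlgebra.norm_le_norm_of_nonneg_of_le (star_mul_self_nonneg x) key).trans ?_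
    rw [norm_smul]
    have : ‖((M^2 : ℝ) : ℂ)‖ = M^2 := by
      rw [Complex.norm_real, Real.norm_of_nonneg (by positivity)]
    rw [this]
    nlinarith [sq_nonneg M]
  have h3 : ‖star x * x‖ = ‖x‖ * ‖x‖ := CStarRing.norm_star_mul_self
  nlinarith [norm_nonneg x]

end helpers

/-- STATEMENT 14: for a unital C*-algebra with orthogonal projections summing to `1`
and `q_i A₀ q_j ≠ 0`, conjugation by the unitaries `u_α = ∑ α(i) q_i` satisfies
`Δ_I(α,β) ≤ ‖Ad u_α − Ad u_β‖ ≤ 2 Δ_I(α,β)`. -/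
theorem ad_norm_bounds (A₀ : Type*) [CStarAlgebra A₀] (n : ℕ) (q : ℕ → A₀)
    (hsa : ∀ i < n, star (q i) = q i) (hidem : ∀ i < n, q i * q i = q i)
    (horth : ∀ i < n, ∀ j < n, i ≠ j → q i * q j = 0)
    (hsum : ∑ i ∈ Finset.range n, q i = 1)
    (hnonzero : ∀ i < n, ∀ j < n, ∃ a : A₀, q i * a * q j ≠ 0)
    (α β : ℕ → Circle) :
    Delta (Finset.range n) α β ≤
      (⨆ a : {a : A₀ // ‖a‖ ≤ 1},
        ‖(∑ i ∈ Finset.range n, (α i : ℂ) • q i) * a *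
            star (∑ i ∈ Finset.range n, (α i : ℂ) • q i) -
          (∑ i ∈ Finset.range n, (β i : ℂ) • q i) * a *
            star (∑ i ∈ Finset.range n, (β i : ℂ) • q i)‖) ∧
    (⨆ a : {a : A₀ // ‖a‖ ≤ 1},
        ‖(∑ i ∈ Finset.range n, (α i : ℂ) • q i) * a *
            star (∑ i ∈ Finset.range n, (α i : ℂ) • q i) -
          (∑ i ∈ Finset.range n, (β i : ℂ) • q i) * a *
            star (∑ i ∈ Finset.range n, (β i : ℂ) • q i)‖) ≤
      2 * Delta (Finset.range n) α β := by
  have hz : ∀ z : Circle, (starRingEnd ℂ) (z : ℂ) * (z : ℂ) = 1 := fun z => by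
    rw [mul_comm, Complex.mul_conj']; simp [Circle.norm_coe]
  have hzn : ∀ z : Circle, ‖(z : ℂ)‖ = 1 := fun z => Circle.norm_coe z
  set uα := ∑ i ∈ Finset.range n, (α i : ℂ) • q i with huα
  set uβ := ∑ i ∈ Finset.range n, (β i : ℂ) • q i with huβ
  set Δ := Delta (Finset.range n) α β with hΔdef
  have hΔ0 : 0 ≤ Δ := by rw [hΔdef]; unfold Delta; positivity
  set f : {a : A₀ // ‖a‖ ≤ 1} → ℝ :=
    fun a => ‖uα * ↑a * star uα - uβ * ↑a * star uβ‖ with hf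
  have huα1 : ‖uα‖ ≤ 1 :=
    norm_sum_q_le hsa hidem horth hsum zero_le_one (fun i _ => (hzn (α i)).le)
  have huβ1 : ‖uβ‖ ≤ 1 :=
    norm_sum_q_le hsa hidem horth hsum zero_le_one (fun i _ => (hzn (β i)).le)
  have hbound : ∀ a : {a : A₀ // ‖a‖ ≤ 1}, f a ≤ 2 := by
    intro a
    have h1 : ‖uα * ↑a * star uα‖ ≤ 1 := by
      have e1 := norm_mul_le (uα * (a : A₀)) (star uα)
      have e2 := norm_mul_le uα (a : A₀)
      have e3 := a.2
      have e4 : ‖star uα‖ ≤ 1 := by rw [norm_star]; exact huα1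
      nlinarith [norm_nonneg (uα * (a : A₀)), norm_nonneg uα, norm_nonneg (a : A₀),
        norm_nonneg (star uα)]
    have h2 : ‖uβ * ↑a * star uβ‖ ≤ 1 := by
      have e1 := norm_mul_le (uβ * (a : A₀)) (star uβ)
      have e2 := norm_mul_le uβ (a : A₀)
      have e3 := a.2
      have e4 : ‖star uβ‖ ≤ 1 := by rw [norm_star]; exact huβ1
      nlinarith [norm_nonneg (uβ * (a : A₀)), norm_nonneg uβ, norm_nonneg (a : A₀),
        norm_nonneg (star uβ)]
    calc f a ≤ ‖uα * ↑a * star uα‖ + ‖uβ * ↑a * star uβ‖ := norm_sub_le _ _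
      _ ≤ 2 := by linarith
  have hne : Nonempty {a : A₀ // ‖a‖ ≤ 1} := ⟨⟨0, by simp⟩⟩
  have hbdd : BddAbove (Set.range f) := ⟨2, by rintro _ ⟨a, rfl⟩; exact hbound a⟩
  have hS0 : 0 ≤ ⨆ a, f a := by
    refine le_trans ?_ (le_ciSup hbdd ⟨0, by simp⟩)
    simp [hf]
  constructor
  · -- lower bound
    have key : ∀ p ∈ Finset.range n ×ˢ Finset.range n,
        (‖(α p.1 : ℂ) * (starRingEnd ℂ) (α p.2 : ℂ) -
          (β p.1 : ℂ) * (starRingEnd ℂ) (β p.2 : ℂ)‖₊ : NNReal)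
          ≤ (⨆ a, f a).toNNReal := by
      intro p hp
      obtain ⟨hp1, hp2⟩ := Finset.mem_product.mp hp
      have hi : p.1 < n := Finset.mem_range.mp hp1
      have hj : p.2 < n := Finset.mem_range.mp hp2
      obtain ⟨a₀, ha₀⟩ := hnonzero p.1 hi p.2 hj
      set b₀ := q p.1 * a₀ * q p.2 with hb₀
      set rc : ℂ := ((‖b₀‖⁻¹ : ℝ) : ℂ) with hrc
      have hb₀n : ‖b₀‖ ≠ 0 := norm_ne_zero_iff.mpr ha₀
      have hbnorm : ‖rc • b₀‖ = 1 := by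
        rw [norm_smul, hrc, Complex.norm_real, Real.norm_of_nonneg (by positivity),
          inv_mul_cancel₀ hb₀n]
      have hconj : ∀ γ : ℕ → Circle,
          (∑ i ∈ Finset.range n, (γ i : ℂ) • q i) * (rc • b₀) *
            star (∑ i ∈ Finset.range n, (γ i : ℂ) • q i)
          = ((γ p.1 : ℂ) * (starRingEnd ℂ) (γ p.2 : ℂ)) • (rc • b₀) := by
        intro γ
        have e1 : (∑ i ∈ Finset.range n, (γ i : ℂ) • q i) * b₀ = (γ p.1 : ℂ) • b₀ := by
          rw [hb₀, mul_assoc (q p.1), ← mul_assoc _ (q p.1),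
            sum_mul_qi horth hidem _ hi, smul_mul_assoc]
        have e2 : b₀ * star (∑ i ∈ Finset.range n, (γ i : ℂ) • q i)
            = ((starRingEnd ℂ) (γ p.2 : ℂ)) • b₀ := by
          rw [star_sum_q hsa, hb₀, mul_assoc (q p.1 * a₀),
            qi_mul_sum horth hidem _ hj, mul_smul_comm]
        rw [mul_smul_comm, smul_mul_assoc, e1, smul_mul_assoc, e2]
        simp only [smul_smul]
        congr 1
        ring
      have hval : f ⟨rc • b₀, hbnorm.le⟩ =
          ‖(α p.1 : ℂ) * (starRingEnd ℂ) (α p.2 : ℂ) -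
            (β p.1 : ℂ) * (starRingEnd ℂ) (β p.2 : ℂ)‖ := by
        show ‖uα * (rc • b₀) * star uα - uβ * (rc • b₀) * star uβ‖ = _
        rw [huα, huβ, hconj α, hconj β, ← sub_smul, norm_smul, hbnorm, mul_one]
      rw [← NNReal.coe_le_coe, Real.coe_toNNReal _ hS0, coe_nnnorm]
      rw [← hval]
      exact le_ciSup hbdd _
    have hsup := Finset.sup_le key
    rw [hΔdef]
    unfold Delta
    rw [← Real.coe_toNNReal (⨆ a, f a) hS0]
    exact_mod_cast hsup
  · -- upper bound
    rcases Nat.eq_zero_or_pos n with hn | hn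
    · subst hn
      refine ciSup_le fun a => ?_
      have h1 : uα = 0 := by rw [huα]; simp
      have h2 : uβ = 0 := by rw [huβ]; simp
      show f a ≤ 2 * Δ
      simp only [hf]
      rw [h1, h2]
      simp only [zero_mul, mul_zero, star_zero, sub_zero, norm_zero, sub_self]
      positivity
    · refine ciSup_le fun a => ?_
      show f a ≤ 2 * Δ
      set γ : ℂ := (α 0 : ℂ) * (starRingEnd ℂ) (β 0 : ℂ) with hγ
      set w := ∑ i ∈ Finset.range n, (γ * (β i : ℂ)) • q i with hwdef
      have hw : w = γ • uβ := by
        rw [hwdef, huβ, Finset.smul_sum]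
        exact Finset.sum_congr rfl fun i _ => (smul_smul γ _ _).symm
      have hγγ : γ * (starRingEnd ℂ) γ = 1 := by
        rw [hγ, map_mul, Complex.conj_conj]
        linear_combination ((starRingEnd ℂ) (β 0 : ℂ) * (β 0 : ℂ)) * hz (α 0) + hz (β 0)
      have hγγ' : (starRingEnd ℂ) γ * γ = 1 := by rw [mul_comm]; exact hγγ
      have hwconj : w * ↑a * star w = uβ * ↑a * star uβ := by
        rw [hw, star_smul, smul_mul_assoc, smul_mul_assoc, mul_smul_comm, smul_smul,
          Complex.star_def, hγγ, one_smul]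
      have hpair : ∀ i < n, ‖(α i : ℂ) * (starRingEnd ℂ) (α 0 : ℂ)
          - (β i : ℂ) * (starRingEnd ℂ) (β 0 : ℂ)‖ ≤ Δ := by
        intro i hi
        have hp : (i, 0) ∈ Finset.range n ×ˢ Finset.range n :=
          Finset.mem_product.mpr ⟨Finset.mem_range.mpr hi, Finset.mem_range.mpr hn⟩
        have hle := Finset.le_sup (f := fun p : ℕ × ℕ =>
          ‖(α p.1 : ℂ) * (starRingEnd ℂ) (α p.2 : ℂ) -
            (β p.1 : ℂ) * (starRingEnd ℂ) (β p.2 : ℂ)‖₊) hp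
        rw [hΔdef]
        unfold Delta
        rw [← coe_nnnorm]
        exact_mod_cast hle
      have hcoef : ∀ i < n, ‖(α i : ℂ) - γ * (β i : ℂ)‖ ≤ Δ := by
        intro i hi
        have heq : (α i : ℂ) - γ * (β i : ℂ)
            = (α 0 : ℂ) * ((α i : ℂ) * (starRingEnd ℂ) (α 0 : ℂ)
              - (β i : ℂ) * (starRingEnd ℂ) (β 0 : ℂ)) := by
          rw [hγ]
          linear_combination (-(α i : ℂ)) * hz (α 0)
        rw [heq, norm_mul, hzn (α 0), one_mul]
        exact hpair i hi
      have hdw : uα - w = ∑ i ∈ Finset.range n, ((α i : ℂ) - γ * (β i : ℂ)) • q i := by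
        rw [huα, hwdef, ← Finset.sum_sub_distrib]
        exact Finset.sum_congr rfl fun i _ => (sub_smul _ _ _).symm
      have hd1 : ‖uα - w‖ ≤ Δ := by
        rw [hdw]; exact norm_sum_q_le hsa hidem horth hsum hΔ0 hcoef
      have hd2 : ‖star uα - star w‖ ≤ Δ := by
        rw [← star_sub, norm_star]; exact hd1
      have hw1 : ‖w‖ ≤ 1 := by
        refine norm_sum_q_le hsa hidem horth hsum zero_le_one fun i _ => ?_
        rw [norm_mul, hγ, norm_mul, hzn (α 0), hzn (β i), RCLike.norm_conj, hzn (β 0)]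
        norm_num
      have decomp : uα * ↑a * star uα - w * ↑a * star w
          = (uα - w) * (↑a * star uα) + w * (↑a * (star uα - star w)) := by
        noncomm_ring
      have hA1 : ‖(↑a : A₀) * star uα‖ ≤ 1 := by
        calc ‖(↑a : A₀) * star uα‖ ≤ ‖(↑a : A₀)‖ * ‖star uα‖ := norm_mul_le _ _
          _ ≤ 1 * 1 := by
              rw [norm_star]
              exact mul_le_mul a.2 huα1 (norm_nonneg _) zero_le_one
          _ = 1 := one_mul 1
      have hA2 : ‖(↑a : A₀) * (star uα - star w)‖ ≤ Δ := by
        calc ‖(↑a : A₀) * (star uα - star w)‖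
            ≤ ‖(↑a : A₀)‖ * ‖star uα - star w‖ := norm_mul_le _ _
          _ ≤ 1 * Δ := mul_le_mul a.2 hd2 (norm_nonneg _) zero_le_one
          _ = Δ := one_mul Δ
      calc f a = ‖uα * ↑a * star uα - w * ↑a * star w‖ := by
            simp only [hf]; rw [hwconj]
        _ = ‖(uα - w) * (↑a * star uα) + w * (↑a * (star uα - star w))‖ := by rw [decomp]
        _ ≤ ‖(uα - w) * (↑a * star uα)‖ + ‖w * (↑a * (star uα - star w))‖ := norm_add_le _ _
        _ ≤ ‖uα - w‖ * ‖(↑a : A₀) * star uα‖ + ‖w‖ * ‖(↑a : A₀) * (star uα - star w)‖ :=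
            add_le_add (norm_mul_le _ _) (norm_mul_le _ _)
        _ ≤ Δ * 1 + 1 * Δ := add_le_add
            (mul_le_mul hd1 hA1 (norm_nonneg _) hΔ0)
            (mul_le_mul hw1 hA2 (norm_nonneg _) zero_le_one)
        _ = 2 * Δ := by ring

end
end

section
/- Let A₀ be a unital C*-algebra containing positive elements q_0, …, q_{n−1} such that ∑_{i<n} q_i = 1 and such that for all i, j < n, all k ∈ ℕ, and every ε > 0 there exists a₀ ∈ A₀ with ‖a₀‖ = 1 and ‖q_i^k·a₀·q_j^k‖ ≥ 1 − ε. For α : {0,…,n−1} → 𝕋 let u_α = ∑_{i<n} α(i)·q_i. Then, with I = {0,…,n−1}: Δ_I(α,1) ≤ sup_{a ∈ A₀, ‖a‖ ≤ 1} ‖u_α·a·u_α* − a‖ ≤ 2·Δ_I(α,1). -/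
open Filter Topology MultiplierAlgebra

noncomputable section

/-- `selfPow a k` is the `(k+1)`-st power `a^(k+1)` of `a`; this makes sense in a
non-unital algebra (where there is no `a^0`), and as `k` ranges over `ℕ` it realizes all
(positive) powers of `a`. -/
def selfPow {A : Type*} [Mul A] (a : A) : ℕ → A
  | 0 => a
  | k + 1 => a * selfPow a k

set_option maxHeartbeats 1000000

section Helpers
variable {A : Type*} [CStarAlgebra A] [PartialOrder A] [StarOrderedRing A]

lemma my_selfPow_eq {B : Type*} [Monoid B] (a : B) (k : ℕ) : selfPow a k = a ^ (k + 1) := by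
  induction k with
  | zero => simp [selfPow]
  | succ k ih => rw [selfPow, ih, ← pow_succ']

lemma my_real_smul_nonneg {r : ℝ} (hr : 0 ≤ r) {a : A} (ha : 0 ≤ a) : 0 ≤ r • a := by
  have h := star_left_conjugate_nonneg ha ((Real.sqrt r : ℝ) • (1 : A))
  have hst : star ((Real.sqrt r : ℝ) • (1 : A)) = (Real.sqrt r : ℝ) • (1 : A) := by simp
  rw [hst] at h
  have heq : ((Real.sqrt r : ℝ) • (1 : A)) * a * ((Real.sqrt r : ℝ) • (1 : A)) = r • a := by
    simp [smul_mul_assoc, mul_smul_comm, smul_smul, Real.mul_self_sqrt hr]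
  rwa [heq] at h

lemma my_poly_bound (m : ℕ) {t : ℝ} (h0 : 0 ≤ t) (h1 : t ≤ 1) :
    t ^ m * (1 - t) ≤ 1 / (m + 1) := by
  have hgeom : (∑ k ∈ Finset.range (m + 1), t ^ k) * (1 - t) = 1 - t ^ (m + 1) := by
    have h := geom_sum_mul t (m + 1)
    ring_nf at h ⊢
    linarith
  have hterm : ((m : ℝ) + 1) * t ^ m ≤ ∑ k ∈ Finset.range (m + 1), t ^ k := by
    calc ((m : ℝ) + 1) * t ^ m = ∑ _k ∈ Finset.range (m + 1), t ^ m := by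
          simp [Finset.sum_const]
      _ ≤ ∑ k ∈ Finset.range (m + 1), t ^ k :=
          Finset.sum_le_sum fun k hk =>
            pow_le_pow_of_le_one h0 h1 (Nat.le_of_lt_succ (Finset.mem_range.mp hk))
  have h2 : ((m : ℝ) + 1) * (t ^ m * (1 - t)) ≤ 1 - t ^ (m + 1) := by
    calc ((m : ℝ) + 1) * (t ^ m * (1 - t)) = (((m : ℝ) + 1) * t ^ m) * (1 - t) := by ring
      _ ≤ (∑ k ∈ Finset.range (m + 1), t ^ k) * (1 - t) :=
          mul_le_mul_of_nonneg_right hterm (by linarith)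
      _ = 1 - t ^ (m + 1) := hgeom
  have h3 : (0:ℝ) ≤ t ^ (m + 1) := pow_nonneg h0 _
  rw [le_div_iff₀ (by positivity)]
  nlinarith

lemma my_pow_sub_pow_norm {a : A} (ha : 0 ≤ a) (ha1 : a ≤ 1) (m : ℕ) :
    ‖a ^ m - a ^ (m + 1)‖ ≤ 1 / (m + 1) := by
  have hsa : IsSelfAdjoint a := .of_nonneg ha
  have heq : a ^ m - a ^ (m + 1) = cfc (fun t : ℝ => t ^ m - t ^ (m + 1)) a := by
    rw [cfc_sub _ _ a, cfc_pow_id a, cfc_pow_id a]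
  rw [heq]
  refine norm_cfc_le (by positivity) fun x hx => ?_
  have hx0 : 0 ≤ x := spectrum_nonneg_of_nonneg ha hx
  have hx1 : x ≤ 1 := (CFC.le_one_iff (R := ℝ) a).mp ha1 x hx
  have hre : x ^ m - x ^ (m + 1) = x ^ m * (1 - x) := by ring
  rw [Real.norm_eq_abs, hre, abs_of_nonneg (mul_nonneg (pow_nonneg hx0 _) (by linarith))]
  exact my_poly_bound m hx0 hx1

lemma my_cross_norm {a b : A} (ha : 0 ≤ a) (ha1 : a ≤ 1) (hb : 0 ≤ b) (hb1 : b ≤ 1)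
    (hba : b ≤ 1 - a) (k : ℕ) :
    ‖b * a ^ (k + 1)‖ ≤ Real.sqrt (1 / (2*(k:ℝ)+3)) := by
  have hpp : ‖a ^ (2*k+2) - a ^ (2*k+3)‖ ≤ 1 / (2*(k:ℝ)+3) := by
    have h := my_pow_sub_pow_norm ha ha1 (2*k+2)
    have e1 : 2*k+2+1 = 2*k+3 := by omega
    have e2 : ((2*k+2 : ℕ):ℝ) + 1 = 2*(k:ℝ)+3 := by push_cast; ring
    rw [e1, e2] at h
    exact h
  set p := a ^ (k + 1) with hp
  have hp_sa : IsSelfAdjoint p := (IsSelfAdjoint.of_nonneg ha).pow _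
  have hb_sa : IsSelfAdjoint b := .of_nonneg hb
  have hx : star (b * p) * (b * p) = p * (b ^ 2) * p := by
    rw [star_mul, hp_sa.star_eq, hb_sa.star_eq]
    simp [sq, mul_assoc]
  have h1 : b ^ 2 ≤ b := by
    have h := CStarAlgebra.pow_antitone hb hb1 (by norm_num : (1:ℕ) ≤ 2)
    simpa using h
  have h2 : star (b * p) * (b * p) ≤ p * (1 - a) * p := by
    rw [hx]
    calc p * b ^ 2 * p ≤ p * b * p := by
          have h := star_left_conjugate_le_conjugate h1 p
          rwa [hp_sa.star_eq] at h
      _ ≤ p * (1 - a) * p := by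
          have h := star_left_conjugate_le_conjugate hba p
          rwa [hp_sa.star_eq] at h
  have h3 : p * (1 - a) * p = a ^ (2*k+2) - a ^ (2*k+3) := by
    rw [mul_sub, sub_mul, mul_one]
    congr 1
    · rw [hp, ← pow_add]; congr 1; omega
    · rw [hp, ← pow_succ, ← pow_add]; congr 1; omega
  have h4 : ‖star (b * p) * (b * p)‖ ≤ 1 / (2*(k:ℝ)+3) := by
    refine le_trans ?_ hpp
    exact CStarAlgebra.norm_le_norm_of_nonneg_of_le (star_mul_self_nonneg _) (h3 ▸ h2)
  rw [CStarRing.norm_star_mul_self] at h4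
  refine (Real.le_sqrt (norm_nonneg _) (by positivity)).mpr ?_
  rw [sq]; exact h4

lemma my_key_norm_bound (n : ℕ) (q : ℕ → A) (hpos : ∀ i < n, 0 ≤ q i)
    (hsum : ∑ i ∈ Finset.range n, q i = 1) (c : ℕ → ℂ) {M : ℝ} (hM : 0 ≤ M)
    (hc : ∀ i < n, ‖c i‖ ≤ M) : ‖∑ i ∈ Finset.range n, c i • q i‖ ≤ M := by
  set v := ∑ i ∈ Finset.range n, c i • q i with hv
  have hvs : star v = ∑ i ∈ Finset.range n, (starRingEnd ℂ) (c i) • q i := by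
    rw [hv, star_sum]
    refine Finset.sum_congr rfl fun i hi => ?_
    rw [star_smul, (IsSelfAdjoint.of_nonneg (hpos i (Finset.mem_range.mp hi))).star_eq]
    rfl
  have key : ∀ i ∈ Finset.range n,
      star (v - c i • 1) * q i * (v - c i • 1)
        = star v * (q i * v) - c i • (star v * q i) - (starRingEnd ℂ) (c i) • (q i * v)
          + ((starRingEnd ℂ) (c i) * c i) • q i := by
    intro i _
    rw [star_sub, star_smul, star_one]
    simp only [sub_mul, mul_sub, smul_sub, smul_mul_assoc, mul_smul_comm, one_mul, mul_one,
      smul_smul, mul_assoc, Complex.star_def]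
    module
  have hSpos : (0:A) ≤ ∑ i ∈ Finset.range n,
      star (v - c i • 1) * q i * (v - c i • 1) :=
    Finset.sum_nonneg fun i hi => star_left_conjugate_nonneg (hpos i (Finset.mem_range.mp hi)) _
  have hSeq : ∑ i ∈ Finset.range n, star (v - c i • 1) * q i * (v - c i • 1)
      = (∑ i ∈ Finset.range n, ((starRingEnd ℂ) (c i) * c i) • q i) - star v * v := by
    rw [Finset.sum_congr rfl key]
    have e1 : ∑ i ∈ Finset.range n, star v * (q i * v) = star v * v := by
      rw [← Finset.mul_sum, ← Finset.sum_mul, hsum, one_mul]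
    have e2 : ∑ i ∈ Finset.range n, c i • (star v * q i) = star v * v := by
      have h : ∀ i ∈ Finset.range n, c i • (star v * q i) = star v * (c i • q i) :=
        fun i _ => (mul_smul_comm _ _ _).symm
      rw [Finset.sum_congr rfl h, ← Finset.mul_sum, ← hv]
    have e3 : ∑ i ∈ Finset.range n, (starRingEnd ℂ) (c i) • (q i * v) = star v * v := by
      have h : ∀ i ∈ Finset.range n,
          (starRingEnd ℂ) (c i) • (q i * v) = ((starRingEnd ℂ) (c i) • q i) * v :=
        fun i _ => (smul_mul_assoc _ _ _).symm
      rw [Finset.sum_congr rfl h, ← Finset.sum_mul, ← hvs]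
    simp only [Finset.sum_add_distrib, Finset.sum_sub_distrib, e1, e2, e3]
    abel
  have hle : star v * v ≤ ∑ i ∈ Finset.range n, ((starRingEnd ℂ) (c i) * c i) • q i := by
    rw [hSeq] at hSpos
    exact sub_nonneg.mp hSpos
  have hD : ∑ i ∈ Finset.range n, ((starRingEnd ℂ) (c i) * c i) • q i
      ≤ algebraMap ℝ A (M ^ 2) := by
    have h1 : ∀ i ∈ Finset.range n,
        ((starRingEnd ℂ) (c i) * c i) • q i = (‖c i‖ ^ 2 : ℝ) • q i := by
      intro i _
      rw [Complex.conj_mul']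
      norm_cast
    rw [Finset.sum_congr rfl h1, Algebra.algebraMap_eq_smul_one, ← hsum, Finset.smul_sum]
    rw [← sub_nonneg, ← Finset.sum_sub_distrib]
    refine Finset.sum_nonneg fun i hi => ?_
    rw [← sub_smul]
    refine my_real_smul_nonneg ?_ (hpos i (Finset.mem_range.mp hi))
    have := hc i (Finset.mem_range.mp hi)
    nlinarith [norm_nonneg (c i)]
  have hnorm : ‖star v * v‖ ≤ M ^ 2 :=
    (CStarAlgebra.norm_le_iff_le_algebraMap _ (by positivity) (star_mul_self_nonneg v)).mpr
      (hle.trans hD)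
  rw [CStarRing.norm_star_mul_self] at hnorm
  nlinarith [norm_nonneg v]

end Helpers

/-- the analogue of Statement 14 for positive elements `q_i` summing
to `1` and satisfying the norm condition on powers:
`Δ_I(α,1) ≤ ‖Ad u_α − id‖ ≤ 2 Δ_I(α,1)`.
(`selfPow (q i) k` is the `(k+1)`-st power of `q i`, realizing all positive powers.) -/
theorem ad_norm_bounds_weak (A₀ : Type*) [CStarAlgebra A₀] [PartialOrder A₀]
    [StarOrderedRing A₀] (n : ℕ) (q : ℕ → A₀)
    (hpos : ∀ i < n, 0 ≤ q i)
    (hsum : ∑ i ∈ Finset.range n, q i = 1)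
    (hnorms : ∀ i < n, ∀ j < n, ∀ k : ℕ, ∀ ε : ℝ, 0 < ε →
      ∃ a₀ : A₀, ‖a₀‖ = 1 ∧ 1 - ε ≤ ‖selfPow (q i) k * a₀ * selfPow (q j) k‖)
    (α : ℕ → Circle) :
    Delta (Finset.range n) α 1 ≤
      (⨆ a : {a : A₀ // ‖a‖ ≤ 1},
        ‖(∑ i ∈ Finset.range n, (α i : ℂ) • q i) * a *
            star (∑ i ∈ Finset.range n, (α i : ℂ) • q i) - (a : A₀)‖) ∧
    (⨆ a : {a : A₀ // ‖a‖ ≤ 1},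
        ‖(∑ i ∈ Finset.range n, (α i : ℂ) • q i) * a *
            star (∑ i ∈ Finset.range n, (α i : ℂ) • q i) - (a : A₀)‖) ≤
      2 * Delta (Finset.range n) α 1 := by
  classical
  set u : A₀ := ∑ i ∈ Finset.range n, (α i : ℂ) • q i with hu
  set S : ℝ := ⨆ a : {a : A₀ // ‖a‖ ≤ 1}, ‖u * a * star u - (a : A₀)‖ with hSdef
  have hq1 : ∀ i < n, q i ≤ 1 := fun i hi => by
    rw [← hsum]
    exact Finset.single_le_sum (fun j hj => hpos j (Finset.mem_range.mp hj))
      (Finset.mem_range.mpr hi)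
  have hcirc : ∀ z : Circle, ‖(z : ℂ)‖ = 1 := fun z => Circle.norm_coe z
  have hu1 : ‖u‖ ≤ 1 :=
    my_key_norm_bound n q hpos hsum _ zero_le_one (fun i _ => le_of_eq (hcirc (α i)))
  have hus : ‖star u‖ ≤ 1 := by rwa [norm_star]
  have hD : Delta (Finset.range n) α 1 =
      (((Finset.range n ×ˢ Finset.range n).sup fun p : ℕ × ℕ =>
        ‖(α p.1 : ℂ) * (starRingEnd ℂ) (α p.2 : ℂ) - 1‖₊ : NNReal) : ℝ) := by
    simp [Delta]
  have hD0 : 0 ≤ Delta (Finset.range n) α 1 := by rw [hD]; exact NNReal.coe_nonneg _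
  have hDmem : ∀ i < n, ∀ j < n,
      ‖(α i : ℂ) * (starRingEnd ℂ) (α j : ℂ) - 1‖ ≤ Delta (Finset.range n) α 1 := by
    intro i hi j hj
    rw [hD]
    have hmem : (i, j) ∈ Finset.range n ×ˢ Finset.range n :=
      Finset.mem_product.mpr ⟨Finset.mem_range.mpr hi, Finset.mem_range.mpr hj⟩
    have h := Finset.le_sup (f := fun p : ℕ × ℕ =>
      ‖(α p.1 : ℂ) * (starRingEnd ℂ) (α p.2 : ℂ) - 1‖₊) hmem
    exact_mod_cast h
  have hbdd : BddAbove (Set.range fun a : {a : A₀ // ‖a‖ ≤ 1} =>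
      ‖u * a * star u - (a : A₀)‖) := by
    refine ⟨2, ?_⟩
    rintro x ⟨a, rfl⟩
    have ha := a.2
    have h1 : ‖u * (a : A₀) * star u‖ ≤ 1 := by
      calc ‖u * (a : A₀) * star u‖ ≤ ‖u * (a : A₀)‖ * ‖star u‖ := norm_mul_le _ _
        _ ≤ (‖u‖ * ‖(a : A₀)‖) * ‖star u‖ :=
            mul_le_mul_of_nonneg_right (norm_mul_le _ _) (norm_nonneg _)
        _ ≤ 1 := by
            have h0u : (0:ℝ) ≤ ‖u‖ := norm_nonneg _
            have h0a : (0:ℝ) ≤ ‖(a : A₀)‖ := norm_nonneg _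
            have h0s : (0:ℝ) ≤ ‖star u‖ := norm_nonneg _
            have hxy : ‖u‖ * ‖(a : A₀)‖ ≤ 1 := by nlinarith
            nlinarith
    calc ‖u * (a : A₀) * star u - (a : A₀)‖ ≤ ‖u * (a : A₀) * star u‖ + ‖(a : A₀)‖ :=
          norm_sub_le _ _
      _ ≤ 2 := by linarith
  haveI hne : Nonempty {a : A₀ // ‖a‖ ≤ 1} := ⟨⟨0, by simp⟩⟩
  have hS0 : 0 ≤ S := by
    have h := le_ciSup hbdd (⟨0, by simp⟩ : {a : A₀ // ‖a‖ ≤ 1})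
    simpa using h
  -- LOWER BOUND
  have pair : ∀ i, i < n → ∀ j, j < n →
      ‖(α i : ℂ) * (starRingEnd ℂ) (α j : ℂ) - 1‖ ≤ S := by
    intro i hi j hj
    set δ := ‖(α i : ℂ) * (starRingEnd ℂ) (α j : ℂ) - 1‖ with hδ
    have hδ0 : 0 ≤ δ := norm_nonneg _
    have hδ2 : δ ≤ 2 := by
      calc δ ≤ ‖(α i : ℂ) * (starRingEnd ℂ) (α j : ℂ)‖ + ‖(1 : ℂ)‖ := norm_sub_le _ _
        _ ≤ 2 := by
            rw [norm_mul, hcirc, RCLike.norm_conj, hcirc]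
            norm_num
    have hn1 : (1 : ℝ) ≤ n := by exact_mod_cast Nat.one_le_iff_ne_zero.mpr (by omega)
    have key : ∀ ε : ℝ, 0 < ε → δ ≤ S + ε := by
      intro ε hε
      set k : ℕ := ⌈(8 * (n : ℝ) / ε) ^ 2⌉₊ with hk
      set η : ℝ := Real.sqrt (1 / (2 * (k : ℝ) + 3)) with hηdef
      have hη0 : 0 ≤ η := Real.sqrt_nonneg _
      have hηle : η ≤ ε / (8 * n) := by
        have h1 : ((8 * (n : ℝ) / ε) ^ 2) ≤ k := Nat.le_ceil _
        have h2 : 1 / (2 * (k : ℝ) + 3) ≤ (ε / (8 * n)) ^ 2 := by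
          rw [div_le_iff₀ (by positivity)]
          have h3 : (ε / (8 * n)) ^ 2 * (8 * (n : ℝ) / ε) ^ 2 = 1 := by
            field_simp
          nlinarith [sq_nonneg (ε / (8 * n)), (Nat.cast_nonneg k : (0:ℝ) ≤ (k:ℝ))]
        calc η ≤ Real.sqrt ((ε / (8 * n)) ^ 2) := Real.sqrt_le_sqrt h2
          _ = ε / (8 * n) := Real.sqrt_sq (by positivity)
      obtain ⟨a₀, ha₀, hblow⟩ := hnorms i hi j hj k (ε / 4) (by linarith)
      rw [my_selfPow_eq, my_selfPow_eq] at hblow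
      set p1 : A₀ := q i ^ (k + 1) with hp1
      set p2 : A₀ := q j ^ (k + 1) with hp2
      set b : A₀ := p1 * a₀ * p2 with hb
      have hp1n : ‖p1‖ ≤ 1 := by
        rw [hp1]
        calc ‖q i ^ (k+1)‖ ≤ ‖q i‖ ^ (k+1) := norm_pow_le' _ (Nat.succ_pos k)
          _ ≤ 1 := pow_le_one₀ (norm_nonneg _)
            ((CStarAlgebra.norm_le_one_iff_of_nonneg _ (hpos i hi)).mpr (hq1 i hi))
      have hp2n : ‖p2‖ ≤ 1 := by
        rw [hp2]
        calc ‖q j ^ (k+1)‖ ≤ ‖q j‖ ^ (k+1) := norm_pow_le' _ (Nat.succ_pos k)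
          _ ≤ 1 := pow_le_one₀ (norm_nonneg _)
            ((CStarAlgebra.norm_le_one_iff_of_nonneg _ (hpos j hj)).mpr (hq1 j hj))
      have hbn : ‖b‖ ≤ 1 := by
        rw [hb]
        calc ‖p1 * a₀ * p2‖ ≤ ‖p1 * a₀‖ * ‖p2‖ := norm_mul_le _ _
          _ ≤ (‖p1‖ * ‖a₀‖) * ‖p2‖ :=
              mul_le_mul_of_nonneg_right (norm_mul_le _ _) (norm_nonneg _)
          _ ≤ 1 := by
              rw [ha₀]
              have h0p1 : (0:ℝ) ≤ ‖p1‖ := norm_nonneg _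
              have h0p2 : (0:ℝ) ≤ ‖p2‖ := norm_nonneg _
              nlinarith
      have hqle : ∀ s, s < n → ∀ i', i' < n → s ≠ i' → q s ≤ 1 - q i' := by
        intro s hs i' hi' hne
        have hsub : (∑ t ∈ Finset.range n, q t) - q i'
            = ∑ t ∈ (Finset.range n).erase i', q t :=
          (Finset.sum_erase_eq_sub (Finset.mem_range.mpr hi')).symm
        rw [← hsum, hsub]
        exact Finset.single_le_sum
          (fun t ht => hpos t (Finset.mem_range.mp (Finset.mem_of_mem_erase ht)))
          (Finset.mem_erase.mpr ⟨hne, Finset.mem_range.mpr hs⟩)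
      have hcross1 : ∀ s, s < n → s ≠ i → ‖q s * p1‖ ≤ η := by
        intro s hs hsi
        rw [hp1, hηdef]
        exact my_cross_norm (hpos i hi) (hq1 i hi) (hpos s hs) (hq1 s hs)
          (hqle s hs i hi hsi) k
      have hcross2 : ∀ t, t < n → t ≠ j → ‖p2 * q t‖ ≤ η := by
        intro t ht htj
        have hstar : star (q t * p2) = p2 * q t := by
          rw [star_mul, (IsSelfAdjoint.of_nonneg (hpos t ht)).star_eq,
            ((IsSelfAdjoint.of_nonneg (hpos j hj)).pow (k+1)).star_eq]
        rw [← hstar, norm_star, hp2, hηdef]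
        exact my_cross_norm (hpos j hj) (hq1 j hj) (hpos t ht) (hq1 t ht)
          (hqle t ht j hj htj) k
      have hqsb : ∀ s, s < n → s ≠ i → ‖q s * b‖ ≤ η := by
        intro s hs hsi
        have he : q s * b = (q s * p1) * (a₀ * p2) := by rw [hb]; simp [mul_assoc]
        rw [he]
        calc ‖(q s * p1) * (a₀ * p2)‖ ≤ ‖q s * p1‖ * ‖a₀ * p2‖ := norm_mul_le _ _
          _ ≤ η * 1 := by
              refine mul_le_mul (hcross1 s hs hsi) ?_ (norm_nonneg _) hη0
              calc ‖a₀ * p2‖ ≤ ‖a₀‖ * ‖p2‖ := norm_mul_le _ _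
                _ ≤ 1 := by rw [ha₀, one_mul]; exact hp2n
          _ = η := mul_one _
      have hbqt : ∀ t, t < n → t ≠ j → ‖b * q t‖ ≤ η := by
        intro t ht htj
        have he : b * q t = (p1 * a₀) * (p2 * q t) := by rw [hb]; simp [mul_assoc]
        rw [he]
        calc ‖(p1 * a₀) * (p2 * q t)‖ ≤ ‖p1 * a₀‖ * ‖p2 * q t‖ := norm_mul_le _ _
          _ ≤ 1 * η := by
              refine mul_le_mul ?_ (hcross2 t ht htj) (norm_nonneg _) zero_le_one
              calc ‖p1 * a₀‖ ≤ ‖p1‖ * ‖a₀‖ := norm_mul_le _ _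
                _ ≤ 1 := by rw [ha₀, mul_one]; exact hp1n
          _ = η := one_mul _
      have hub : ‖u * b - (α i : ℂ) • b‖ ≤ (n : ℝ) * (2 * η) := by
        have e1 : u * b = ∑ s ∈ Finset.range n, (α s : ℂ) • (q s * b) := by
          rw [hu, Finset.sum_mul]
          exact Finset.sum_congr rfl fun s _ => smul_mul_assoc _ _ _
        have e2 : (α i : ℂ) • b = ∑ s ∈ Finset.range n, (α i : ℂ) • (q s * b) := by
          rw [← Finset.smul_sum, ← Finset.sum_mul, hsum, one_mul]
        rw [e1, e2, ← Finset.sum_sub_distrib]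
        have e3 : ∀ s ∈ Finset.range n,
            (α s : ℂ) • (q s * b) - (α i : ℂ) • (q s * b)
              = ((α s : ℂ) - (α i : ℂ)) • (q s * b) :=
          fun s _ => (sub_smul _ _ _).symm
        rw [Finset.sum_congr rfl e3]
        refine le_trans (norm_sum_le _ _) ?_
        have hterm : ∀ s ∈ Finset.range n,
            ‖((α s : ℂ) - (α i : ℂ)) • (q s * b)‖ ≤ 2 * η := by
          intro s hs
          by_cases hsi : s = i
          · subst hsi
            simp only [sub_self, zero_smul, norm_zero]
            positivity
          · rw [norm_smul]
            have h1 : ‖(α s : ℂ) - (α i : ℂ)‖ ≤ 2 := by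
              calc ‖(α s : ℂ) - (α i : ℂ)‖ ≤ ‖(α s : ℂ)‖ + ‖(α i : ℂ)‖ := norm_sub_le _ _
                _ ≤ 2 := by rw [hcirc, hcirc]; norm_num
            exact mul_le_mul h1 (hqsb s (Finset.mem_range.mp hs) hsi) (norm_nonneg _)
              (by norm_num)
        calc ∑ s ∈ Finset.range n, ‖((α s : ℂ) - (α i : ℂ)) • (q s * b)‖
            ≤ ∑ _s ∈ Finset.range n, 2 * η := Finset.sum_le_sum hterm
          _ = (n : ℝ) * (2 * η) := by simp [Finset.sum_const, Finset.card_range, nsmul_eq_mul]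
      have hustar : star u = ∑ t ∈ Finset.range n, (starRingEnd ℂ) ((α t : ℂ)) • q t := by
        rw [hu, star_sum]
        refine Finset.sum_congr rfl fun t ht => ?_
        rw [star_smul, (IsSelfAdjoint.of_nonneg (hpos t (Finset.mem_range.mp ht))).star_eq]
        rfl
      have hub2 : ‖b * star u - (starRingEnd ℂ) ((α j : ℂ)) • b‖ ≤ (n : ℝ) * (2 * η) := by
        have e1 : b * star u = ∑ t ∈ Finset.range n, (starRingEnd ℂ) ((α t : ℂ)) • (b * q t) := by
          rw [hustar, Finset.mul_sum]
          exact Finset.sum_congr rfl fun t _ => mul_smul_comm _ _ _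
        have e2 : (starRingEnd ℂ) ((α j : ℂ)) • b
            = ∑ t ∈ Finset.range n, (starRingEnd ℂ) ((α j : ℂ)) • (b * q t) := by
          rw [← Finset.smul_sum, ← Finset.mul_sum, hsum, mul_one]
        rw [e1, e2, ← Finset.sum_sub_distrib]
        have e3 : ∀ t ∈ Finset.range n,
            (starRingEnd ℂ) ((α t : ℂ)) • (b * q t) - (starRingEnd ℂ) ((α j : ℂ)) • (b * q t)
              = ((starRingEnd ℂ) ((α t : ℂ)) - (starRingEnd ℂ) ((α j : ℂ))) • (b * q t) :=
          fun t _ => (sub_smul _ _ _).symm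
        rw [Finset.sum_congr rfl e3]
        refine le_trans (norm_sum_le _ _) ?_
        have hterm : ∀ t ∈ Finset.range n,
            ‖((starRingEnd ℂ) ((α t : ℂ)) - (starRingEnd ℂ) ((α j : ℂ))) • (b * q t)‖
              ≤ 2 * η := by
          intro t ht
          by_cases htj : t = j
          · subst htj
            simp only [sub_self, zero_smul, norm_zero]
            positivity
          · rw [norm_smul]
            have h1 : ‖(starRingEnd ℂ) ((α t : ℂ)) - (starRingEnd ℂ) ((α j : ℂ))‖ ≤ 2 := by
              calc ‖(starRingEnd ℂ) ((α t : ℂ)) - (starRingEnd ℂ) ((α j : ℂ))‖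
                  ≤ ‖(starRingEnd ℂ) ((α t : ℂ))‖ + ‖(starRingEnd ℂ) ((α j : ℂ))‖ :=
                    norm_sub_le _ _
                _ ≤ 2 := by rw [RCLike.norm_conj, RCLike.norm_conj, hcirc, hcirc]; norm_num
            exact mul_le_mul h1 (hbqt t (Finset.mem_range.mp ht) htj) (norm_nonneg _)
              (by norm_num)
        calc ∑ t ∈ Finset.range n,
            ‖((starRingEnd ℂ) ((α t : ℂ)) - (starRingEnd ℂ) ((α j : ℂ))) • (b * q t)‖
            ≤ ∑ _t ∈ Finset.range n, 2 * η := Finset.sum_le_sum hterm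
          _ = (n : ℝ) * (2 * η) := by simp [Finset.sum_const, Finset.card_range, nsmul_eq_mul]
      have hcomb : ‖u * b * star u - ((α i : ℂ) * (starRingEnd ℂ) ((α j : ℂ))) • b‖
          ≤ (n : ℝ) * (2 * η) + (n : ℝ) * (2 * η) := by
        have iden : u * b * star u - ((α i : ℂ) * (starRingEnd ℂ) ((α j : ℂ))) • b
            = (u * b - (α i : ℂ) • b) * star u
              + (α i : ℂ) • (b * star u - (starRingEnd ℂ) ((α j : ℂ)) • b) := by
          simp only [sub_mul, smul_mul_assoc, smul_sub, smul_smul]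
          abel
        rw [iden]
        refine le_trans (norm_add_le _ _) (add_le_add ?_ ?_)
        · calc ‖(u * b - (α i : ℂ) • b) * star u‖
              ≤ ‖u * b - (α i : ℂ) • b‖ * ‖star u‖ := norm_mul_le _ _
            _ ≤ (n : ℝ) * (2 * η) * 1 :=
                mul_le_mul hub hus (norm_nonneg _) (by positivity)
            _ = (n : ℝ) * (2 * η) := mul_one _
        · rw [norm_smul, hcirc, one_mul]
          exact hub2
      have hSb : ‖u * b * star u - b‖ ≤ S := by
        have h := le_ciSup hbdd (⟨b, hbn⟩ : {a : A₀ // ‖a‖ ≤ 1})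
        simpa using h
      have h1 : ‖((α i : ℂ) * (starRingEnd ℂ) ((α j : ℂ))) • b - b‖ = δ * ‖b‖ := by
        have : ((α i : ℂ) * (starRingEnd ℂ) ((α j : ℂ))) • b - b
            = ((α i : ℂ) * (starRingEnd ℂ) ((α j : ℂ)) - 1) • b := by
          rw [sub_smul, one_smul]
        rw [this, norm_smul, hδ]
      have h2 : ((α i : ℂ) * (starRingEnd ℂ) ((α j : ℂ))) • b - b
          = (u * b * star u - b) - (u * b * star u
              - ((α i : ℂ) * (starRingEnd ℂ) ((α j : ℂ))) • b) := by abel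
      have h3 : δ * ‖b‖ ≤ S + ((n : ℝ) * (2 * η) + (n : ℝ) * (2 * η)) := by
        rw [← h1, h2]
        calc ‖(u * b * star u - b) - (u * b * star u
              - ((α i : ℂ) * (starRingEnd ℂ) ((α j : ℂ))) • b)‖
            ≤ ‖u * b * star u - b‖ + ‖u * b * star u
              - ((α i : ℂ) * (starRingEnd ℂ) ((α j : ℂ))) • b‖ := norm_sub_le _ _
          _ ≤ S + ((n : ℝ) * (2 * η) + (n : ℝ) * (2 * η)) := add_le_add hSb hcomb
      have h4nη : (n : ℝ) * (2 * η) + (n : ℝ) * (2 * η) ≤ ε / 2 := by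
        have h5 : 4 * (n : ℝ) * η ≤ 4 * (n : ℝ) * (ε / (8 * n)) := by
          refine mul_le_mul_of_nonneg_left hηle (by positivity)
        have h6 : 4 * (n : ℝ) * (ε / (8 * n)) = ε / 2 := by
          field_simp
          ring
        nlinarith
      have hδb : δ * (1 - ε / 4) ≤ δ * ‖b‖ := by
        refine mul_le_mul_of_nonneg_left ?_ hδ0
        linarith [hblow]
      nlinarith [mul_le_mul_of_nonneg_right hδ2 hε.le, mul_nonneg hδ0 hε.le]
    by_contra hcon
    push_neg at hcon
    have := key ((δ - S) / 2) (by linarith)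
    linarith
  have lower : Delta (Finset.range n) α 1 ≤ S := by
    rw [hD, ← Real.coe_toNNReal S hS0, NNReal.coe_le_coe]
    refine Finset.sup_le fun p hp => ?_
    obtain ⟨hp1, hp2⟩ := Finset.mem_product.mp hp
    rw [Real.le_toNNReal_iff_coe_le hS0, coe_nnnorm]
    exact pair p.1 (Finset.mem_range.mp hp1) p.2 (Finset.mem_range.mp hp2)
  -- UPPER BOUND
  have upper : S ≤ 2 * Delta (Finset.range n) α 1 := by
    rcases Nat.eq_zero_or_pos n with hn0 | hn
    · subst hn0
      have h01 : (0 : A₀) = 1 := by simpa using hsum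
      refine ciSup_le fun a => ?_
      have ha0 : (a : A₀) = 0 := by
        calc (a : A₀) = (a : A₀) * 1 := (mul_one _).symm
          _ = (a : A₀) * 0 := by rw [← h01]
          _ = 0 := mul_zero _
      have hu0 : u = 0 := by rw [hu]; simp
      rw [hu0, ha0]
      simpa using (by linarith : (0:ℝ) ≤ 2 * Delta (Finset.range 0) α 1)
    · have hlam : (α 0 : ℂ) * (starRingEnd ℂ) ((α 0 : ℂ)) = 1 := by
        rw [Complex.mul_conj, Complex.normSq_eq_norm_sq]
        norm_cast
        simp [hcirc]
      have hw : u - (α 0 : ℂ) • 1 = ∑ i ∈ Finset.range n, ((α i : ℂ) - (α 0 : ℂ)) • q i := by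
        rw [hu]
        nth_rewrite 1 [← hsum]
        rw [Finset.smul_sum, ← Finset.sum_sub_distrib]
        exact Finset.sum_congr rfl fun i _ => (sub_smul _ _ _).symm
      have hwn : ‖u - (α 0 : ℂ) • 1‖ ≤ Delta (Finset.range n) α 1 := by
        rw [hw]
        refine my_key_norm_bound n q hpos hsum _ hD0 fun s hs => ?_
        have he : ‖(α s : ℂ) - (α 0 : ℂ)‖
            = ‖(α s : ℂ) * (starRingEnd ℂ) ((α 0 : ℂ)) - 1‖ := by
          rw [← hlam]
          rw [show (α s : ℂ) * (starRingEnd ℂ) ((α 0 : ℂ))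
              - (α 0 : ℂ) * (starRingEnd ℂ) ((α 0 : ℂ))
              = ((α s : ℂ) - (α 0 : ℂ)) * (starRingEnd ℂ) ((α 0 : ℂ)) from by ring]
          rw [norm_mul, RCLike.norm_conj, hcirc, mul_one]
        rw [he]
        exact hDmem s hs 0 hn
      have hwsn : ‖star (u - (α 0 : ℂ) • 1)‖ ≤ Delta (Finset.range n) α 1 := by
        rwa [norm_star]
      refine ciSup_le fun a => ?_
      have ha := a.2
      have iden : u * (a : A₀) * star u - (a : A₀)
          = (u - (α 0 : ℂ) • 1) * (a : A₀) * star u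
            + (α 0 : ℂ) • ((a : A₀) * star (u - (α 0 : ℂ) • 1)) := by
        rw [star_sub, star_smul, star_one, Complex.star_def]
        simp only [sub_mul, mul_sub, smul_mul_assoc, mul_smul_comm, smul_sub, smul_smul,
          one_mul, mul_one, hlam, one_smul]
        abel
      rw [iden]
      have t1 : ‖(u - (α 0 : ℂ) • 1) * (a : A₀) * star u‖ ≤ Delta (Finset.range n) α 1 := by
        calc ‖(u - (α 0 : ℂ) • 1) * (a : A₀) * star u‖
            ≤ ‖(u - (α 0 : ℂ) • 1) * (a : A₀)‖ * ‖star u‖ := norm_mul_le _ _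
          _ ≤ (‖u - (α 0 : ℂ) • 1‖ * ‖(a : A₀)‖) * ‖star u‖ :=
              mul_le_mul_of_nonneg_right (norm_mul_le _ _) (norm_nonneg _)
          _ ≤ (Delta (Finset.range n) α 1 * 1) * 1 := by
              refine mul_le_mul (mul_le_mul hwn ha (norm_nonneg _) hD0) hus
                (norm_nonneg _) (by positivity)
          _ = Delta (Finset.range n) α 1 := by ring
      have t2 : ‖(α 0 : ℂ) • ((a : A₀) * star (u - (α 0 : ℂ) • 1))‖
          ≤ Delta (Finset.range n) α 1 := by
        rw [norm_smul, hcirc, one_mul]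
        calc ‖(a : A₀) * star (u - (α 0 : ℂ) • 1)‖
            ≤ ‖(a : A₀)‖ * ‖star (u - (α 0 : ℂ) • 1)‖ := norm_mul_le _ _
          _ ≤ 1 * Delta (Finset.range n) α 1 :=
              mul_le_mul ha hwsn (norm_nonneg _) (by norm_num)
          _ = Delta (Finset.range n) α 1 := one_mul _
      calc ‖(u - (α 0 : ℂ) • 1) * (a : A₀) * star u
            + (α 0 : ℂ) • ((a : A₀) * star (u - (α 0 : ℂ) • 1))‖
          ≤ ‖(u - (α 0 : ℂ) • 1) * (a : A₀) * star u‖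
            + ‖(α 0 : ℂ) • ((a : A₀) * star (u - (α 0 : ℂ) • 1))‖ := norm_add_le _ _
        _ ≤ 2 * Delta (Finset.range n) α 1 := by linarith
  exact ⟨lower, upper⟩
end
end

section
/- Let A be a C*-algebra and let (r_i)_{i∈ℕ} be positive elements of A whose partial sums p_n = ∑_{i<n} r_i form an increasing approximate unit for A with p_{n+1}·p_n = p_n for all n (hence the r_i pairwise commute and r_i·r_j = 0 whenever |i − j| ≥ 2). Let α : ℕ → 𝕋 satisfy lim_{i→∞} (α(i+1) − α(i)) = 0 in ℂ. Then the family (2·(Re(α(i)·conj(α(i+1))) − 1)·r_i·r_{i+1})_{i∈ℕ} is summable in A; that is, the series ∑_i 2·(Re(α(i)·conj(α(i+1))) − 1)·r_i·r_{i+1} converges unconditionally in the norm of A. -/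
open Filter Topology MultiplierAlgebra

noncomputable section

/-- Power trick: for pairwise orthogonal self-adjoint elements,
the `2^k`-th power of the norm of the sum is bounded by the sum of powers. -/
lemma aux_pow_bound {A : Type*} [NonUnitalCStarAlgebra A] :
    ∀ (k : ℕ) (t : Finset ℕ) (y : ℕ → A),
      (∀ i ∈ t, IsSelfAdjoint (y i)) →
      (∀ i ∈ t, ∀ j ∈ t, i ≠ j → y i * y j = 0) →
      ‖∑ i ∈ t, y i‖ ^ (2 ^ k) ≤ ∑ i ∈ t, ‖y i‖ ^ (2 ^ k) := by
  intro k
  induction k with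
  | zero =>
    intro t y _ _
    simpa using norm_sum_le t y
  | succ k ih =>
    intro t y hsa horth
    have hs : IsSelfAdjoint (∑ i ∈ t, y i) := by
      rw [IsSelfAdjoint, star_sum]
      exact Finset.sum_congr rfl fun i hi => (hsa i hi).star_eq
    have hsq : (∑ i ∈ t, y i) * (∑ i ∈ t, y i) = ∑ i ∈ t, y i * y i := by
      rw [Finset.sum_mul_sum]
      rw [Finset.sum_congr rfl (fun i hi =>
        Finset.sum_eq_single_of_mem i hi (fun j hj hji => horth i hi j hj (Ne.symm hji)))]
    have hnorm_sq : ‖(∑ i ∈ t, y i)‖ ^ 2 = ‖(∑ i ∈ t, y i) * (∑ i ∈ t, y i)‖ := by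
      have h := CStarRing.norm_star_mul_self (x := ∑ i ∈ t, y i)
      rw [hs.star_eq] at h
      rw [sq, h]
    have key := ih t (fun i => y i * y i)
      (fun i hi => by
        have := (hsa i hi).star_eq
        rw [IsSelfAdjoint, star_mul, this])
      (fun i hi j hj hij => by
        rw [mul_assoc, ← mul_assoc (y i) (y j), horth i hi j hj hij, zero_mul, mul_zero])
    calc ‖∑ i ∈ t, y i‖ ^ (2 ^ (k + 1))
        = (‖∑ i ∈ t, y i‖ ^ 2) ^ (2 ^ k) := by
          rw [← pow_mul, pow_succ, mul_comm]
      _ = ‖∑ i ∈ t, y i * y i‖ ^ (2 ^ k) := by rw [hnorm_sq, hsq]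
      _ ≤ ∑ i ∈ t, ‖y i * y i‖ ^ (2 ^ k) := key
      _ ≤ ∑ i ∈ t, ‖y i‖ ^ (2 ^ (k + 1)) := by
          refine Finset.sum_le_sum fun i hi => ?_
          have h1 : ‖y i * y i‖ ≤ ‖y i‖ ^ 2 := by
            rw [sq]; exact norm_mul_le _ _
          calc ‖y i * y i‖ ^ (2 ^ k) ≤ (‖y i‖ ^ 2) ^ (2 ^ k) :=
                pow_le_pow_left₀ (norm_nonneg _) h1 _
            _ = ‖y i‖ ^ (2 ^ (k + 1)) := by rw [← pow_mul, pow_succ, mul_comm]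

/-- The norm of a sum of pairwise orthogonal self-adjoint elements is bounded
by the max of the norms. -/
lemma norm_sum_orth_le {A : Type*} [NonUnitalCStarAlgebra A]
    (t : Finset ℕ) (y : ℕ → A)
    (hsa : ∀ i ∈ t, IsSelfAdjoint (y i))
    (horth : ∀ i ∈ t, ∀ j ∈ t, i ≠ j → y i * y j = 0)
    (M : ℝ) (hM : 0 ≤ M) (hy : ∀ i ∈ t, ‖y i‖ ≤ M) :
    ‖∑ i ∈ t, y i‖ ≤ M := by
  rcases hM.eq_or_lt with hM0 | hMpos
  · have : ∀ i ∈ t, y i = 0 := fun i hi =>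
      norm_le_zero_iff.mp (by rw [hM0]; exact hy i hi)
    rw [Finset.sum_eq_zero this, norm_zero]
    exact hM
  by_contra h
  push_neg at h
  have hr : 1 < ‖∑ i ∈ t, y i‖ / M := (one_lt_div hMpos).mpr h
  have key : ∀ k : ℕ, (‖∑ i ∈ t, y i‖ / M) ^ (2 ^ k) ≤ (t.card : ℝ) := by
    intro k
    have h1 := aux_pow_bound k t y hsa horth
    have h2 : ∑ i ∈ t, ‖y i‖ ^ (2 ^ k) ≤ (t.card : ℝ) * M ^ (2 ^ k) := by
      calc ∑ i ∈ t, ‖y i‖ ^ (2 ^ k) ≤ ∑ _i ∈ t, M ^ (2 ^ k) :=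
            Finset.sum_le_sum fun i hi => pow_le_pow_left₀ (norm_nonneg _) (hy i hi) _
        _ = (t.card : ℝ) * M ^ (2 ^ k) := by rw [Finset.sum_const, nsmul_eq_mul]
    rw [div_pow, div_le_iff₀ (pow_pos hMpos _)]
    exact h1.trans h2
  have htend : Tendsto (fun k : ℕ => (‖∑ i ∈ t, y i‖ / M) ^ (2 ^ k)) atTop atTop :=
    (tendsto_pow_atTop_atTop_of_one_lt hr).comp
      (tendsto_pow_atTop_atTop_of_one_lt (one_lt_two : 1 < (2:ℕ)))
  obtain ⟨k, hk⟩ := (htend.eventually_gt_atTop (t.card : ℝ)).exists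
  exact absurd (key k) (not_le.mpr hk)

/-- if `α(i+1) − α(i) → 0` then the family
`2(Re(α(i) conj(α(i+1))) − 1) r_i r_{i+1}` is (unconditionally norm) summable. -/
theorem summable_tail (A : Type*) [NonUnitalCStarAlgebra A] [PartialOrder A]
    [StarOrderedRing A] (r : ℕ → A)
    (hpos : ∀ i, 0 ≤ r i)
    (hmono : Monotone (fun n => ∑ i ∈ Finset.range n, r i))
    (happrox : ∀ a : A,
      Tendsto (fun n => ‖(∑ i ∈ Finset.range n, r i) * a - a‖) atTop (𝓝 0))
    (hsucc : ∀ n, (∑ i ∈ Finset.range (n + 1), r i) * (∑ i ∈ Finset.range n, r i) =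
      ∑ i ∈ Finset.range n, r i)
    (α : ℕ → Circle)
    (hα : Tendsto (fun i => (α (i + 1) : ℂ) - (α i : ℂ)) atTop (𝓝 0)) :
    Summable (fun i =>
      (((2 * (((α i : ℂ) * (starRingEnd ℂ) (α (i + 1) : ℂ)).re - 1) : ℝ) : ℂ)) •
        (r i * r (i + 1))) := by
  classical
  set p : ℕ → A := fun n => ∑ i ∈ Finset.range n, r i with hp
  -- basic facts about p
  have hp_nonneg : ∀ n, 0 ≤ p n := fun n => Finset.sum_nonneg fun i _ => hpos i
  have hp_sa : ∀ n, IsSelfAdjoint (p n) := fun n => (hp_nonneg n).isSelfAdjoint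
  have hr_eq : ∀ i, r i = p (i + 1) - p i := by
    intro i
    simp only [hp, Finset.sum_range_succ]
    abel
  have hPP : ∀ n k, p (n + k + 1) * p n = p n := by
    intro n k
    induction k with
    | zero => exact hsucc n
    | succ k ih =>
      have : p (n + k + 1 + 1) * p (n + k + 1) = p (n + k + 1) := hsucc (n + k + 1)
      calc p (n + (k + 1) + 1) * p n = p (n + k + 1 + 1) * (p (n + k + 1) * p n) := by
            rw [ih]; ring_nf
        _ = (p (n + k + 1 + 1) * p (n + k + 1)) * p n := by rw [mul_assoc]
        _ = p (n + k + 1) * p n := by rw [this]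
        _ = p n := ih
  have hlt : ∀ m n, n < m → p m * p n = p n := by
    intro m n hnm
    have : m = n + (m - n - 1) + 1 := by omega
    rw [this]; exact hPP n (m - n - 1)
  have hlt' : ∀ m n, n < m → p n * p m = p n := by
    intro m n hnm
    have := congrArg star (hlt m n hnm)
    rwa [star_mul, (hp_sa m).star_eq, (hp_sa n).star_eq] at this
  -- q i = r i * r (i+1) = p (i+1) - p (i+1)^2
  set q : ℕ → A := fun i => p (i + 1) - p (i + 1) * p (i + 1) with hq
  have hq_eq : ∀ i, r i * r (i + 1) = q i := by
    intro i
    rw [hr_eq i, hr_eq (i + 1)]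
    have h1 : p (i + 1) * p (i + 2) = p (i + 1) := hlt' (i + 2) (i + 1) (by omega)
    have h2 : p i * p (i + 2) = p i := hlt' (i + 2) i (by omega)
    have h3 : p i * p (i + 1) = p i := hlt' (i + 1) i (by omega)
    simp only [hq, mul_sub, sub_mul, h1, h2, h3]
    abel
  have hq_sa : ∀ i, IsSelfAdjoint (q i) := by
    intro i
    rw [IsSelfAdjoint]
    simp only [hq, star_sub, star_mul, (hp_sa (i + 1)).star_eq]
  have hq_orth : ∀ i j, i ≠ j → q i * q j = 0 := by
    have key : ∀ i j, i < j → q i * q j = 0 ∧ q j * q i = 0 := by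
      intro i j hij
      set a := p (i + 1) with ha
      set b := p (j + 1) with hb
      have hab : a * b = a := hlt' (j + 1) (i + 1) (by omega)
      have hba : b * a = a := hlt (j + 1) (i + 1) (by omega)
      constructor
      · have : (a - a * a) * (b - b * b) =
            a * b - (a * b) * b - a * (a * b) + (a * (a * b)) * b := by
          simp only [mul_sub, sub_mul]
          noncomm_ring
        have hab2 : a * a * b = a * a := by rw [mul_assoc, hab]
        simp only [hq, ← ha, ← hb, this, hab, hab2]
        abel
      · have : (b - b * b) * (a - a * a) =
            b * a - (b * a) * a - b * (b * a) + (b * (b * a)) * a := by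
          simp only [mul_sub, sub_mul]
          noncomm_ring
        simp only [hq, ← ha, ← hb, this, hba, hab]
        abel
    intro i j hij
    rcases lt_or_gt_of_ne hij with h | h
    · exact (key i j h).1
    · exact (key j i h).2
  -- uniform bound on ‖p n‖ via Banach–Steinhaus
  obtain ⟨C, hC⟩ : ∃ C, ∀ n, ‖p n‖ ≤ C := by
    set T : ℕ → A →L[ℂ] A := fun n => ContinuousLinearMap.mul ℂ A (p n) with hT
    have hbd : ∀ x : A, ∃ C, ∀ n, ‖T n x‖ ≤ C := by
      intro x
      have h0 : Tendsto (fun n => ‖p n * x - x‖) atTop (𝓝 0) := happrox x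
      have h1 : Tendsto (fun n => ‖p n * x - x‖ + ‖x‖) atTop (𝓝 (0 + ‖x‖)) :=
        h0.add tendsto_const_nhds
      obtain ⟨C, hC⟩ := h1.bddAbove_range
      refine ⟨C, fun n => ?_⟩
      have : ‖p n * x‖ ≤ ‖p n * x - x‖ + ‖x‖ := by
        calc ‖p n * x‖ = ‖p n * x - x + x‖ := by congr 1; abel
          _ ≤ ‖p n * x - x‖ + ‖x‖ := norm_add_le _ _
      exact this.trans (hC (Set.mem_range_self n))
    obtain ⟨C, hC⟩ := banach_steinhaus hbd
    refine ⟨max C 0, fun n => ?_⟩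
    rcases eq_or_ne (p n) 0 with h0 | h0
    · rw [h0, norm_zero]; exact le_max_right _ _
    · have hlen : ‖p n * p n‖ ≤ C * ‖p n‖ := by
        calc ‖p n * p n‖ = ‖T n (p n)‖ := by simp [hT]
          _ ≤ ‖T n‖ * ‖p n‖ := (T n).le_opNorm _
          _ ≤ C * ‖p n‖ := by
              exact mul_le_mul_of_nonneg_right (hC n) (norm_nonneg _)
      have hsq : ‖p n * p n‖ = ‖p n‖ * ‖p n‖ := by
        have h := CStarRing.norm_star_mul_self (x := p n)
        rwa [(hp_sa n).star_eq] at h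
      rw [hsq] at hlen
      have : ‖p n‖ ≤ C :=
        le_of_mul_le_mul_right hlen (norm_pos_iff.mpr h0)
      exact this.trans (le_max_left _ _)
  set B : ℝ := C + C * C + 1 with hB
  have hqB : ∀ i, ‖q i‖ ≤ B := by
    intro i
    have h0 : 0 ≤ C := (norm_nonneg (p 0)).trans (hC 0)
    calc ‖q i‖ ≤ ‖p (i + 1)‖ + ‖p (i + 1) * p (i + 1)‖ := norm_sub_le _ _
      _ ≤ C + C * C := by
          refine add_le_add (hC _) ?_
          calc ‖p (i + 1) * p (i + 1)‖ ≤ ‖p (i + 1)‖ * ‖p (i + 1)‖ := norm_mul_le _ _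
            _ ≤ C * C := mul_le_mul (hC _) (hC _) (norm_nonneg _) h0
      _ ≤ B := by simp [hB]
  have hBpos : 0 < B := by
    have h0 : 0 ≤ C := (norm_nonneg (p 0)).trans (hC 0)
    have : 0 ≤ C * C := mul_nonneg h0 h0
    simp only [hB]; linarith
  -- the coefficients tend to 0
  set c : ℕ → ℝ := fun i => 2 * (((α i : ℂ) * (starRingEnd ℂ) (α (i + 1) : ℂ)).re - 1)
    with hc_def
  have hc : Tendsto c atTop (𝓝 0) := by
    have habs : ∀ i, |c i| ≤ 2 * ‖(α (i + 1) : ℂ) - (α i : ℂ)‖ := by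
      intro i
      have h1 : (α i : ℂ) * (starRingEnd ℂ) (α (i + 1) : ℂ) - 1 =
          (starRingEnd ℂ) (α (i + 1) : ℂ) * ((α i : ℂ) - (α (i + 1) : ℂ)) := by
        have : (starRingEnd ℂ) (α (i + 1) : ℂ) * (α (i + 1) : ℂ) = 1 := by
          rw [mul_comm, Complex.mul_conj]
          norm_cast
          simp [Complex.normSq_eq_norm_sq, Circle.norm_coe]
        rw [mul_sub, this]
        ring
      have h2 : ‖(α i : ℂ) * (starRingEnd ℂ) (α (i + 1) : ℂ) - 1‖ =
          ‖(α (i + 1) : ℂ) - (α i : ℂ)‖ := by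
        rw [h1, norm_mul]
        simp [RCLike.norm_conj, Circle.norm_coe, ← norm_neg ((α i : ℂ) - (α (i + 1) : ℂ))]
      have h3 : |((α i : ℂ) * (starRingEnd ℂ) (α (i + 1) : ℂ)).re - 1| ≤
          ‖(α i : ℂ) * (starRingEnd ℂ) (α (i + 1) : ℂ) - 1‖ := by
        have := Complex.abs_re_le_norm ((α i : ℂ) * (starRingEnd ℂ) (α (i + 1) : ℂ) - 1)
        simpa using this
      calc |c i| = 2 * |((α i : ℂ) * (starRingEnd ℂ) (α (i + 1) : ℂ)).re - 1| := by
            rw [hc_def, abs_mul]; norm_num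
        _ ≤ 2 * ‖(α i : ℂ) * (starRingEnd ℂ) (α (i + 1) : ℂ) - 1‖ := by linarith [h3]
        _ = 2 * ‖(α (i + 1) : ℂ) - (α i : ℂ)‖ := by rw [h2]
    have hub : Tendsto (fun i => 2 * ‖(α (i + 1) : ℂ) - (α i : ℂ)‖) atTop (𝓝 0) := by
      have := (hα.norm).const_mul 2
      simpa using this
    have h1 : Tendsto (fun i => |c i|) atTop (𝓝 0) := by
      apply squeeze_zero (fun i => abs_nonneg _) habs hub
    exact tendsto_zero_iff_abs_tendsto_zero c |>.mpr h1
  -- put everything together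
  rw [summable_iff_vanishing_norm]
  intro ε hε
  have h2 : Tendsto (fun i => |c i| * B) atTop (𝓝 0) := by
    simpa using hc.abs.mul_const B
  have h3 : ∀ᶠ i in atTop, |c i| * B < ε / 2 :=
    h2.eventually_lt_const (by linarith)
  rw [eventually_atTop] at h3
  obtain ⟨N, hN⟩ := h3
  refine ⟨Finset.range N, fun t ht => ?_⟩
  have hmem : ∀ i ∈ t, N ≤ i := by
    intro i hi
    by_contra hlt2
    push_neg at hlt2
    exact (Finset.disjoint_left.mp ht hi) (Finset.mem_range.mpr hlt2)
  have hfeq : ∀ i,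
      (((2 * (((α i : ℂ) * (starRingEnd ℂ) (α (i + 1) : ℂ)).re - 1) : ℝ) : ℂ)) •
        (r i * r (i + 1)) = ((c i : ℝ) : ℂ) • q i := by
    intro i
    rw [hq_eq]
  have hsum_eq : (∑ i ∈ t,
      (((2 * (((α i : ℂ) * (starRingEnd ℂ) (α (i + 1) : ℂ)).re - 1) : ℝ) : ℂ)) •
        (r i * r (i + 1))) = ∑ i ∈ t, ((c i : ℝ) : ℂ) • q i :=
    Finset.sum_congr rfl fun i _ => hfeq i
  rw [hsum_eq]
  have hbound : ‖∑ i ∈ t, ((c i : ℝ) : ℂ) • q i‖ ≤ ε / 2 := by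
    apply norm_sum_orth_le t (fun i => ((c i : ℝ) : ℂ) • q i)
    · intro i _
      rw [IsSelfAdjoint, star_smul, Complex.star_def, Complex.conj_ofReal, (hq_sa i).star_eq]
    · intro i _ j _ hij
      rw [smul_mul_smul_comm, hq_orth i j hij, smul_zero]
    · linarith
    · intro i hi
      have h4 : ‖((c i : ℝ) : ℂ) • q i‖ = |c i| * ‖q i‖ := by
        rw [norm_smul, Complex.norm_real, Real.norm_eq_abs]
      rw [h4]
      have h5 : |c i| * ‖q i‖ ≤ |c i| * B :=
        mul_le_mul_of_nonneg_left (hqB i) (abs_nonneg _)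
      exact h5.trans (le_of_lt (hN i (hmem i hi)))
  exact lt_of_le_of_lt hbound (by linarith)
end
end

section
/- Let A be a C*-algebra, H a complex Hilbert space, and π : A → B(H) a faithful (injective) irreducible representation, i.e. an injective star-algebra homomorphism such that the only closed subspaces of H invariant under every operator π(a) are {0} and H. Let (r_i)_{i∈ℕ} be positive elements of A with ‖r_i‖ = 1 for all i whose partial sums p_n = ∑_{i<n} r_i form an approximate unit for A. Then for all i, j, k ∈ ℕ and every ε > 0 there exists a ∈ A with ‖a‖ = 1 and ‖r_i^k·a·r_j^k‖ ≥ 1 − ε. -/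
open Filter Topology MultiplierAlgebra

noncomputable section

lemma selfPow_map {A B : Type*} [Mul A] [Mul B] {F : Type*} [FunLike F A B]
    [MulHomClass F A B] (φ : F) (a : A) (n : ℕ) :
    φ (selfPow a n) = selfPow (φ a) n := by
  induction n with
  | zero => rfl
  | succ n ih => rw [selfPow, selfPow, map_mul, ih]

lemma selfPow_eq_pow {B : Type*} [Monoid B] (b : B) (n : ℕ) :
    selfPow b n = b ^ (n + 1) := by
  induction n with
  | zero => simp [selfPow]
  | succ n ih => rw [selfPow, ih, pow_succ' b (n+1)]

set_option maxHeartbeats 2000000 in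
/-- STATEMENT 19: if `A` has a faithful irreducible representation and an approximate
unit of partial sums of norm-one positive elements `r_i`, then the norm condition of
Hypothesis (W) holds.
(`selfPow (r i) k` is the `(k+1)`-st power of `r i`, realizing all positive powers.) -/
theorem hypW_of_irreducible (A : Type*) [NonUnitalCStarAlgebra A] [PartialOrder A]
    [StarOrderedRing A]
    (H : Type*) [NormedAddCommGroup H] [InnerProductSpace ℂ H] [CompleteSpace H]
    (π : A →⋆ₙₐ[ℂ] (H →L[ℂ] H)) (hinj : Function.Injective π)
    (hirr : ∀ S : Submodule ℂ H, IsClosed (S : Set H) →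
      (∀ a : A, ∀ x ∈ S, π a x ∈ S) → S = ⊥ ∨ S = ⊤)
    (r : ℕ → A) (hpos : ∀ i, 0 ≤ r i) (hnorm : ∀ i, ‖r i‖ = 1)
    (happrox : ∀ a : A,
      Tendsto (fun n => ‖(∑ i ∈ Finset.range n, r i) * a - a‖) atTop (𝓝 0)) :
    ∀ i j k : ℕ, ∀ ε : ℝ, 0 < ε →
      ∃ a : A, ‖a‖ = 1 ∧ 1 - ε ≤ ‖selfPow (r i) k * a * selfPow (r j) k‖ := by
  intro i j k ε hε
  rcases le_or_gt 1 ε with hε1 | hε1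
  · exact ⟨r i, hnorm i, le_trans (by linarith) (norm_nonneg _)⟩
  by_contra hcon
  push_neg at hcon
  -- the contraction constant
  set c : ℝ := 1 - ε with hc
  have hc0 : 0 < c := by simp only [hc]; linarith
  have hc1 : c < 1 := by simp only [hc]; linarith
  set K : ℕ := k + 1 with hK
  have hKpos : (0:ℝ) < (K:ℝ) := by positivity
  -- Step 1: the two-sided multiplication by the powers is a `c`-contraction.
  have key : ∀ x : A, ‖selfPow (r i) k * x * selfPow (r j) k‖ ≤ c * ‖x‖ := by
    intro x
    rcases eq_or_ne x 0 with rfl | hx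
    · simp
    · have hnx : (0:ℝ) < ‖x‖ := norm_pos_iff.mpr hx
      have h1 : ‖((‖x‖ : ℂ))⁻¹ • x‖ = 1 := by
        rw [norm_smul, norm_inv, Complex.norm_real, Real.norm_eq_abs, abs_of_pos hnx,
          inv_mul_cancel₀ hnx.ne']
      have h2 := hcon _ h1
      rw [mul_smul_comm, smul_mul_assoc, norm_smul, norm_inv, Complex.norm_real,
        Real.norm_eq_abs, abs_of_pos hnx] at h2
      have h4 := mul_le_mul_of_nonneg_left h2.le hnx.le
      rwa [mul_inv_cancel_left₀ hnx.ne', mul_comm ‖x‖ (1 - ε)] at h4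
  -- the operators
  set T : H →L[ℂ] H := π (r i) with hTdef
  set S : H →L[ℂ] H := π (r j) with hSdef
  have hnormmap : ∀ x : A, ‖π x‖ = ‖x‖ := fun x => NonUnitalStarAlgHom.norm_map π hinj x
  have hπcont : Continuous π := (NonUnitalStarAlgHom.isometry π hinj).continuous
  have hisa : IsSelfAdjoint (r i) := (hpos i).isSelfAdjoint
  have hjsa : IsSelfAdjoint (r j) := (hpos j).isSelfAdjoint
  have hTsa : IsSelfAdjoint T := hisa.map π
  have hSsa : IsSelfAdjoint S := hjsa.map π
  have hT0 : (0 : H →L[ℂ] H) ≤ T := by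
    simpa using OrderHomClass.mono π (hpos i)
  have hS0 : (0 : H →L[ℂ] H) ≤ S := by
    simpa using OrderHomClass.mono π (hpos j)
  have hTnorm : ‖T‖ = 1 := by rw [hTdef, hnormmap, hnorm]
  have hSnorm : ‖S‖ = 1 := by rw [hSdef, hnormmap, hnorm]
  have hTne : T ≠ 0 := by
    intro h; rw [h, norm_zero] at hTnorm; exact one_ne_zero hTnorm.symm
  haveI : Nontrivial (H →L[ℂ] H) := nontrivial_of_ne T 0 hTne
  have hT1 : (1:ℝ) ∈ spectrum ℝ T := by
    have := CStarAlgebra.norm_mem_spectrum_of_nonneg hT0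
    rwa [hTnorm] at this
  have hS1 : (1:ℝ) ∈ spectrum ℝ S := by
    have := CStarAlgebra.norm_mem_spectrum_of_nonneg hS0
    rwa [hSnorm] at this
  -- powers of the operators
  have hπi : π (selfPow (r i) k) = T ^ K := by
    rw [selfPow_map, selfPow_eq_pow]
  have hπj : π (selfPow (r j) k) = S ^ K := by
    rw [selfPow_map, selfPow_eq_pow]
  -- Step 2: iterated contraction
  have decay : ∀ m : ℕ, ∀ x : A, ‖T ^ (m*K) * π x * S ^ (m*K)‖ ≤ c ^ m * ‖x‖ := by
    intro m
    induction m with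
    | zero => intro x; simp [hnormmap x]
    | succ m ih =>
      intro x
      have e : T ^ ((m+1)*K) * π x * S ^ ((m+1)*K)
          = T ^ (m*K) * π (selfPow (r i) k * x * selfPow (r j) k) * S ^ (m*K) := by
        have hT' : T ^ ((m+1)*K) = T ^ (m*K) * T ^ K := by rw [Nat.succ_mul, pow_add]
        have hS' : S ^ ((m+1)*K) = S ^ K * S ^ (m*K) := by
          rw [Nat.succ_mul, Nat.add_comm, pow_add]
        rw [hT', hS', map_mul, map_mul, hπi, hπj]
        noncomm_ring
      rw [e]
      calc ‖T ^ (m*K) * π (selfPow (r i) k * x * selfPow (r j) k) * S ^ (m*K)‖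
          ≤ c ^ m * ‖selfPow (r i) k * x * selfPow (r j) k‖ := ih _
        _ ≤ c ^ m * (c * ‖x‖) :=
            mul_le_mul_of_nonneg_left (key x) (pow_nonneg hc0.le m)
        _ = c ^ (m+1) * ‖x‖ := by ring
  -- Step 3: the cut-off level γ'
  set d : ℝ := (1 - c) / (4 * (K:ℝ)) with hd
  have hd0 : 0 < d := by
    apply div_pos (by linarith) (by positivity)
  have hd1 : d < 1 := by
    rw [hd, div_lt_one (by positivity)]
    have : (1:ℝ) ≤ (K:ℝ) := by exact_mod_cast Nat.one_le_iff_ne_zero.mpr (by omega)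
    nlinarith
  set γ : ℝ := 1 - d with hγ
  have hγ0 : 0 < γ := by simp only [hγ]; linarith
  have hγ1 : γ < 1 := by simp only [hγ]; linarith
  have hγpow : c < γ ^ (2*K) := by
    have hb := one_add_mul_le_pow (a := -d) (by linarith) (2*K)
    have h2 : (1:ℝ) + (2*K : ℕ) * (-d) = 1 - 2*(K:ℝ)*d := by push_cast; ring
    have h3 : 1 - 2*(K:ℝ)*d = (1+c)/2 := by
      rw [hd]; field_simp; ring
    have h4 : (1 + -d) = γ := by rw [hγ]; ring
    rw [h2, h3, h4] at hb
    linarith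
  -- the bump function
  set g : ℝ → ℝ := fun t => max 0 (min 1 ((t - γ) * (1 - γ)⁻¹)) with hg
  have hgc : Continuous g := by fun_prop
  have hg_zero : ∀ t : ℝ, t ≤ γ → g t = 0 := by
    intro t ht
    rw [hg]
    simp only
    rw [max_eq_left]
    exact le_trans (min_le_right _ _)
      (mul_nonpos_of_nonpos_of_nonneg (by linarith) (inv_nonneg.mpr (by linarith)))
  have hg0 : g 0 = 0 := hg_zero 0 hγ0.le
  have hg1 : g 1 = 1 := by
    rw [hg]
    simp only
    rw [mul_inv_cancel₀ (by linarith), min_self, max_eq_right zero_le_one]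
  have hg_mem : ∀ t : ℝ, 0 ≤ g t ∧ g t ≤ 1 := by
    intro t
    exact ⟨le_max_left _ _, max_le zero_le_one (min_le_left _ _)⟩
  -- the inverse-power functions
  set hfun : ℕ → ℝ → ℝ := fun m t => ((max γ t)⁻¹) ^ (m*K) with hhfun
  have hmaxpos : ∀ t : ℝ, 0 < max γ t := fun t => lt_of_lt_of_le hγ0 (le_max_left _ _)
  have hhc : ∀ m, Continuous (hfun m) := by
    intro m
    exact ((continuous_const.max continuous_id).inv₀ fun t => (hmaxpos t).ne').pow _
  have hfun_id : ∀ m t, hfun m t * t ^ (m*K) * g t = g t := by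
    intro m t
    rcases le_or_gt t γ with hle | hlt
    · rw [hg_zero t hle]; ring
    · rw [hhfun]
      simp only
      rw [max_eq_right hlt.le, ← mul_pow, inv_mul_cancel₀ (lt_trans hγ0 hlt).ne', one_pow,
        one_mul]
  have hfun_id' : ∀ m t, g t * t ^ (m*K) * hfun m t = g t := by
    intro m t
    have := hfun_id m t
    nlinarith [this]
  -- the projections-up-to-epsilon
  set p : H →L[ℂ] H := cfc g T with hp
  set q : H →L[ℂ] H := cfc g S with hq
  have hp1 : (1:ℝ) ∈ spectrum ℝ p := by
    rw [hp, cfc_map_spectrum (R := ℝ) (ha := hTsa) (hf := hgc.continuousOn)]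
    exact ⟨1, hT1, hg1⟩
  have hq1 : (1:ℝ) ∈ spectrum ℝ q := by
    rw [hq, cfc_map_spectrum (R := ℝ) (ha := hSsa) (hf := hgc.continuousOn)]
    exact ⟨1, hS1, hg1⟩
  have hpne : p ≠ 0 := by
    intro h
    rw [h, spectrum.zero_eq] at hp1
    simp at hp1
  have hqne : q ≠ 0 := by
    intro h
    rw [h, spectrum.zero_eq] at hq1
    simp at hq1
  -- p and q come from A
  have hπp : π (cfcₙ g (r i)) = p := by
    rw [NonUnitalStarAlgHomClass.map_cfcₙ (S := ℂ) π g (r i) hgc.continuousOn hg0 hπcont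
      hisa hTsa]
    exact cfcₙ_eq_cfc hgc.continuousOn hg0
  have hπq : π (cfcₙ g (r j)) = q := by
    rw [NonUnitalStarAlgHomClass.map_cfcₙ (S := ℂ) π g (r j) hgc.continuousOn hg0 hπcont
      hjsa hSsa]
    exact cfcₙ_eq_cfc hgc.continuousOn hg0
  -- Step 4: p * π x * q = 0 for every x
  have main : ∀ x : A, p * π x * q = 0 := by
    intro x
    set b : A := cfcₙ g (r i) * x * cfcₙ g (r j) with hb
    have hπb : π b = p * π x * q := by rw [hb, map_mul, map_mul, hπp, hπq]
    set ρ : ℝ := c / γ ^ (2*K) with hρ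
    have hρ0 : 0 ≤ ρ := by positivity
    have hρ1 : ρ < 1 := by
      rw [hρ, div_lt_one (by positivity)]
      exact hγpow
    have bound : ∀ m : ℕ, ‖p * π x * q‖ ≤ ρ ^ m * ‖b‖ := by
      intro m
      -- the cfc identities
      have e1 : cfc (hfun m) T * T ^ (m*K) * p = p := by
        rw [hp, ← cfc_pow_id (R := ℝ) T (m*K) hTsa,
          ← cfc_mul _ _ T (hhc m).continuousOn (by fun_prop),
          ← cfc_mul _ _ T (by fun_prop) hgc.continuousOn]
        exact cfc_congr fun t _ => hfun_id m t
      have e2 : q * S ^ (m*K) * cfc (hfun m) S = q := by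
        rw [hq, ← cfc_pow_id (R := ℝ) S (m*K) hSsa,
          ← cfc_mul _ _ S (by fun_prop) (by fun_prop),
          ← cfc_mul _ _ S (by fun_prop) (hhc m).continuousOn]
        exact cfc_congr fun t _ => hfun_id' m t
      have e3 : p * π x * q
          = cfc (hfun m) T * (T ^ (m*K) * π b * S ^ (m*K)) * cfc (hfun m) S := by
        rw [hπb]
        nth_rewrite 1 [← e1, ← e2]
        noncomm_ring
      -- norm bounds on the inverse powers
      have hnhT : ‖cfc (hfun m) T‖ ≤ (γ⁻¹) ^ (m*K) := by
        apply norm_cfc_le (by positivity)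
        intro t _
        rw [Real.norm_eq_abs, hhfun]
        simp only
        rw [abs_of_nonneg (by positivity)]
        exact pow_le_pow_left₀ (by positivity)
          (inv_anti₀ hγ0 (le_max_left _ _)) _
      have hnhS : ‖cfc (hfun m) S‖ ≤ (γ⁻¹) ^ (m*K) := by
        apply norm_cfc_le (by positivity)
        intro t _
        rw [Real.norm_eq_abs, hhfun]
        simp only
        rw [abs_of_nonneg (by positivity)]
        exact pow_le_pow_left₀ (by positivity)
          (inv_anti₀ hγ0 (le_max_left _ _)) _
      calc ‖p * π x * q‖
          = ‖cfc (hfun m) T * (T ^ (m*K) * π b * S ^ (m*K)) * cfc (hfun m) S‖ := by rw [e3]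
        _ ≤ ‖cfc (hfun m) T * (T ^ (m*K) * π b * S ^ (m*K))‖ * ‖cfc (hfun m) S‖ :=
            norm_mul_le _ _
        _ ≤ ‖cfc (hfun m) T‖ * ‖T ^ (m*K) * π b * S ^ (m*K)‖ * ‖cfc (hfun m) S‖ :=
            mul_le_mul_of_nonneg_right (norm_mul_le _ _) (norm_nonneg _)
        _ ≤ ((γ⁻¹) ^ (m*K)) * (c ^ m * ‖b‖) * ((γ⁻¹) ^ (m*K)) := by
            have h1 := decay m b
            gcongr
        _ = ρ ^ m * ‖b‖ := by
            rw [hρ, div_pow, ← pow_mul, inv_pow,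
              show 2*K*m = m*K + m*K from by ring, pow_add]
            have h5 : γ ^ (m*K) ≠ 0 := by positivity
            field_simp
    have htend : Tendsto (fun m : ℕ => ρ ^ m * ‖b‖) atTop (𝓝 0) := by
      simpa using (tendsto_pow_atTop_nhds_zero_of_lt_one hρ0 hρ1).mul_const ‖b‖
    have : ‖p * π x * q‖ ≤ 0 := ge_of_tendsto' htend bound
    exact norm_le_zero_iff.mp this
  -- Step 5: the submodule of joint kernels
  set Nsub : Submodule ℂ H := ⨅ a : A, LinearMap.ker (π a : H →ₗ[ℂ] H) with hNsub
  have hNmem : ∀ v : H, v ∈ Nsub ↔ ∀ a : A, π a v = 0 := by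
    intro v
    simp [hNsub, Submodule.mem_iInf, LinearMap.mem_ker]
  have hNclosed : IsClosed (Nsub : Set H) := by
    have : (Nsub : Set H) = ⋂ a : A, (LinearMap.ker (π a : H →ₗ[ℂ] H) : Set H) := by
      rw [hNsub]; exact Submodule.coe_iInf _
    rw [this]
    exact isClosed_iInter fun a => ContinuousLinearMap.isClosed_ker (π a)
  have hNbot : Nsub = ⊥ := by
    rcases hirr Nsub hNclosed (fun a v hv => by
      rw [hNmem] at hv ⊢
      intro b
      rw [hv a, map_zero]) with h | h
    · exact h
    · exfalso
      apply hTne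
      ext v
      have : v ∈ Nsub := h ▸ Submodule.mem_top
      rw [hNmem] at this
      simpa using this (r i)
  -- Step 6: the invariant submodule generated by the range of q
  set gen : Set H := Set.range (fun xw : A × H => π xw.1 (q xw.2)) with hgen
  set M : Submodule ℂ H := (Submodule.span ℂ gen).topologicalClosure with hM
  have hMclosed : IsClosed (M : Set H) := Submodule.isClosed_topologicalClosure _
  have hMinv : ∀ a : A, ∀ v ∈ M, π a v ∈ M := by
    intro a v hv
    have hmapsto : Set.MapsTo (π a) (Submodule.span ℂ gen : Set H)
        (Submodule.span ℂ gen : Set H) := by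
      intro y hy
      have h1 : π a y ∈ (Submodule.span ℂ gen).map ((π a) : H →ₗ[ℂ] H) :=
        Submodule.mem_map_of_mem hy
      have h2 : (Submodule.span ℂ gen).map ((π a) : H →ₗ[ℂ] H) ≤ Submodule.span ℂ gen := by
        rw [Submodule.map_span]
        apply Submodule.span_mono
        rintro - ⟨-, ⟨⟨x, w⟩, rfl⟩, rfl⟩
        refine ⟨(a * x, w), ?_⟩
        simp only [map_mul, ContinuousLinearMap.mul_apply, ContinuousLinearMap.coe_coe]
      exact h2 h1
    have hv' : v ∈ closure (Submodule.span ℂ gen : Set H) := by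
      rw [← Submodule.topologicalClosure_coe]
      exact hv
    have hcl := map_mem_closure (π a).continuous hv' hmapsto
    rw [← Submodule.topologicalClosure_coe] at hcl
    exact hcl
  rcases hirr M hMclosed hMinv with hMbot | hMtop
  · -- M = ⊥ : then the range of q is killed by all of π, so q = 0
    apply hqne
    ext w
    have hgen_mem : ∀ x : A, π x (q w) = 0 := by
      intro x
      have h1 : π x (q w) ∈ M :=
        (Submodule.le_topologicalClosure _) (Submodule.subset_span ⟨(x, w), rfl⟩)
      rw [hMbot] at h1
      simpa using h1
    have : q w ∈ Nsub := (hNmem _).mpr hgen_mem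
    rw [hNbot] at this
    simpa using this
  · -- M = ⊤ : then p kills everything, so p = 0
    exfalso
    apply hpne
    have hle : M ≤ LinearMap.ker (p : H →ₗ[ℂ] H) := by
      apply Submodule.topologicalClosure_minimal
      · rw [Submodule.span_le]
        rintro - ⟨⟨x, w⟩, rfl⟩
        have h0 : p (π x (q w)) = 0 := by
          have h1 : p (π x (q w)) = (p * π x * q) w := by
            simp [ContinuousLinearMap.mul_apply]
          rw [h1, main x, ContinuousLinearMap.zero_apply]
        simpa [LinearMap.mem_ker] using h0
      · exact ContinuousLinearMap.isClosed_ker p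
    ext v
    have : v ∈ LinearMap.ker (p : H →ₗ[ℂ] H) := hle (hMtop ▸ Submodule.mem_top)
    simpa using this
end
end
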